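/- arXiv:2202.07314 — 3 statements merged into one kernel-verified Lean document; each statement's English description precedes it below -/
import Mathlib

section
/- Let 1 ≤ p, q ≤ ∞ and s ∈ [0,2] be such that either (p,q,s) = (1,∞,0), or p > 1 and 1/q + 1 = 1/p + s/2. Then there is a constant C = C(p) > 0 such that for every measurable f : (0,∞) → ℂ one has ‖ r ↦ r^{-s} ∫₀^r f(r') r' dr' ‖_{L^q} ≤ C ‖f‖_{L^p}. -/
open MeasureTheory Set
open scoped ENNReal

/-- The measure `2π r dr` on `(0,∞)`. -/
noncomputable def rmeas : Measure ℝ :=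
  (volume.restrict (Set.Ioi (0:ℝ))).withDensity (fun r => ENNReal.ofReal (2 * Real.pi * r))

namespace HardyAux

noncomputable def w (r : ℝ) : ℝ≥0∞ := ENNReal.ofReal (2 * Real.pi * r)

lemma w_meas : Measurable w := by unfold w; fun_prop

lemma lintegral_rmeas (g : ℝ → ℝ≥0∞) :
    ∫⁻ r, g r ∂rmeas = ∫⁻ r in Ioi (0:ℝ), w r * g r := by
  rw [show rmeas = (volume.restrict (Set.Ioi (0:ℝ))).withDensity w from rfl,
    lintegral_withDensity_eq_lintegral_mul_non_measurable _ w_meas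
    (Filter.Eventually.of_forall fun x => ENNReal.ofReal_lt_top)]
  rfl

lemma restrict_ac : volume.restrict (Ioi (0:ℝ)) ≪ rmeas := by
  apply withDensity_absolutelyContinuous' w_meas.aemeasurable
  filter_upwards [ae_restrict_mem measurableSet_Ioi] with x hx
  have hx' : (0:ℝ) < x := hx
  have : (0:ℝ) < 2 * Real.pi * x := by positivity
  simp [w, ENNReal.ofReal_eq_zero, not_le, this]

noncomputable def Phi (f : ℝ → ℂ) (r : ℝ) : ℝ≥0∞ :=
  ∫⁻ t in Ioc (0:ℝ) r, ENNReal.ofReal t * ‖f t‖₊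

lemma Phi_mono (f : ℝ → ℂ) : Monotone (Phi f) := fun a b hab =>
  lintegral_mono_set (Ioc_subset_Ioc_right hab)

lemma Phi_meas (f : ℝ → ℂ) : Measurable (Phi f) := (Phi_mono f).measurable

lemma enorm_T_le (f : ℝ → ℂ) (s r : ℝ) (hr : 0 < r) :
    (‖((r ^ (-s) : ℝ) : ℂ) * ∫ t in (0:ℝ)..r, (t:ℂ) * f t‖₊ : ℝ≥0∞)
      ≤ ENNReal.ofReal (r ^ (-s)) * Phi f r := by
  rw [nnnorm_mul, ENNReal.coe_mul]
  gcongr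
  · rw [Complex.nnnorm_real, ← enorm_eq_nnnorm (r ^ (-s)), ← Real.enorm_eq_ofReal (Real.rpow_nonneg hr.le _)]
  · rw [intervalIntegral.integral_of_le hr.le]
    refine le_trans (enorm_integral_le_lintegral_enorm _) (le_of_eq ?_)
    refine setLIntegral_congr_fun measurableSet_Ioc fun t ht => ?_
    rw [enorm_eq_nnnorm, nnnorm_mul, ENNReal.coe_mul, Complex.nnnorm_real, ← enorm_eq_nnnorm t,
      Real.enorm_eq_ofReal ht.1.le]


lemma eLpNorm_pow (f : ℝ → ℂ) (p : ℝ≥0∞) {P : ℝ} (hpP : p.toReal = P)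
    (hp0 : p ≠ 0) (hpt : p ≠ ∞) :
    ∫⁻ t in Ioi (0:ℝ), w t * (‖f t‖₊ : ℝ≥0∞) ^ P = eLpNorm f p rmeas ^ P := by
  have hP0 : P ≠ 0 := by
    have := ENNReal.toReal_pos hp0 hpt
    rw [hpP] at this; exact this.ne'
  rw [eLpNorm_eq_lintegral_rpow_enorm_toReal hp0 hpt, lintegral_rmeas, hpP, one_div,
    ENNReal.rpow_inv_rpow hP0]
  rfl

lemma phi_pow_le (f : ℝ → ℂ) (hf : Measurable f) {P r : ℝ} (hP : 1 < P) (hr : 0 < r) :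
    Phi f r ^ P ≤ (∫⁻ t in Ioc (0:ℝ) r, ENNReal.ofReal (t ^ P) * (‖f t‖₊ : ℝ≥0∞) ^ P)
      * ENNReal.ofReal (r ^ (P - 1)) := by
  have hP0 : (0:ℝ) < P := by linarith
  have hpq : P.HolderConjugate (P / (P-1)) := Real.HolderConjugate.conjExponent hP
  have key : Phi f r ≤ (∫⁻ t in Ioc (0:ℝ) r, (ENNReal.ofReal t * (‖f t‖₊ : ℝ≥0∞)) ^ P) ^ (1/P)
      * (ENNReal.ofReal r) ^ (1/(P/(P-1))) := by
    have h := ENNReal.lintegral_mul_le_Lp_mul_Lq (volume.restrict (Ioc (0:ℝ) r)) hpq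
      (f := fun t => ENNReal.ofReal t * (‖f t‖₊ : ℝ≥0∞)) (g := fun _ => (1:ℝ≥0∞))
      (by fun_prop) aemeasurable_const
    simpa [Phi, Real.volume_Ioc, hr.le] using h
  calc Phi f r ^ P ≤ ((∫⁻ t in Ioc (0:ℝ) r, (ENNReal.ofReal t * (‖f t‖₊ : ℝ≥0∞)) ^ P) ^ (1/P)
      * (ENNReal.ofReal r) ^ (1/(P/(P-1)))) ^ P :=
        ENNReal.rpow_le_rpow key hP0.le
    _ = (∫⁻ t in Ioc (0:ℝ) r, (ENNReal.ofReal t * (‖f t‖₊ : ℝ≥0∞)) ^ P)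
          * (ENNReal.ofReal r) ^ (P - 1) := by
        rw [ENNReal.mul_rpow_of_nonneg _ _ hP0.le, ← ENNReal.rpow_mul, ← ENNReal.rpow_mul,
          one_div, inv_mul_cancel₀ hP0.ne', ENNReal.rpow_one]
        congr 2
        field_simp
    _ = (∫⁻ t in Ioc (0:ℝ) r, ENNReal.ofReal (t ^ P) * (‖f t‖₊ : ℝ≥0∞) ^ P)
          * ENNReal.ofReal (r ^ (P - 1)) := by
        rw [ENNReal.ofReal_rpow_of_pos hr]
        congr 1
        refine setLIntegral_congr_fun measurableSet_Ioc (fun t ht => ?_)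
        rw [ENNReal.mul_rpow_of_nonneg _ _ hP0.le, ENNReal.ofReal_rpow_of_pos ht.1]

lemma lintegral_t (r : ℝ) (hr : 0 ≤ r) :
    ∫⁻ t in Ioc (0:ℝ) r, ENNReal.ofReal t = ENNReal.ofReal (r^2/2) := by
  rw [← ofReal_integral_eq_lintegral_ofReal]
  · rw [← intervalIntegral.integral_of_le hr, integral_id]
    norm_num
  · exact (continuous_id.integrableOn_Ioc)
  · exact (ae_restrict_mem measurableSet_Ioc).mono fun t ht => ht.1.le

lemma holder_phi (f : ℝ → ℂ) (hf : Measurable f) (p : ℝ≥0∞) {P : ℝ} (hP : 1 < P)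
    (hpP : p.toReal = P) (hp0 : p ≠ 0) (hpt : p ≠ ∞) {r : ℝ} (hr : 0 < r) :
    Phi f r ≤ ENNReal.ofReal ((2*Real.pi)⁻¹ ^ (1/P) * 2⁻¹ ^ (1 - 1/P))
      * ENNReal.ofReal (r ^ (2 * (1 - 1/P))) * eLpNorm f p rmeas := by
  have hP0 : (0:ℝ) < P := by linarith
  have hP0' : P ≠ 0 := hP0.ne'
  have hP1 : P - 1 ≠ 0 := by linarith
  have hpq : P.HolderConjugate (P / (P-1)) := Real.HolderConjugate.conjExponent hP
  set N := eLpNorm f p rmeas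
  -- Hölder
  have step1 : Phi f r ≤
      (∫⁻ t in Ioc (0:ℝ) r, (ENNReal.ofReal (t ^ (1/P)) * (‖f t‖₊ : ℝ≥0∞)) ^ P) ^ (1/P)
      * (∫⁻ t in Ioc (0:ℝ) r, (ENNReal.ofReal (t ^ (1 - 1/P))) ^ (P/(P-1))) ^ (1/(P/(P-1))) := by
    refine le_trans (le_of_eq ?_) (ENNReal.lintegral_mul_le_Lp_mul_Lq _ hpq
      (by fun_prop) (by fun_prop))
    refine setLIntegral_congr_fun measurableSet_Ioc (fun t ht => ?_)
    simp only [Pi.mul_apply]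
    rw [mul_comm (ENNReal.ofReal (t ^ (1/P))), mul_assoc, ← ENNReal.ofReal_mul
      (Real.rpow_nonneg ht.1.le _), ← Real.rpow_add ht.1]
    norm_num
    ring
  have step2 : (∫⁻ t in Ioc (0:ℝ) r, (ENNReal.ofReal (t ^ (1/P)) * (‖f t‖₊ : ℝ≥0∞)) ^ P) ^ (1/P)
      ≤ ENNReal.ofReal ((2*Real.pi)⁻¹) ^ (1/P) * N := by
    have e1 : ∫⁻ t in Ioc (0:ℝ) r, (ENNReal.ofReal (t ^ (1/P)) * (‖f t‖₊ : ℝ≥0∞)) ^ P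
        = ∫⁻ t in Ioc (0:ℝ) r, ENNReal.ofReal t * (‖f t‖₊ : ℝ≥0∞) ^ P := by
      refine setLIntegral_congr_fun measurableSet_Ioc (fun t ht => ?_)
      rw [ENNReal.mul_rpow_of_nonneg _ _ hP0.le, ENNReal.ofReal_rpow_of_pos
        (Real.rpow_pos_of_pos ht.1 _), ← Real.rpow_mul ht.1.le, one_div,
        inv_mul_cancel₀ hP0', Real.rpow_one]
    have e2 : ∫⁻ t in Ioc (0:ℝ) r, ENNReal.ofReal t * (‖f t‖₊ : ℝ≥0∞) ^ P
        ≤ ENNReal.ofReal ((2*Real.pi)⁻¹) * N ^ P := by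
      refine le_trans (lintegral_mono_set Ioc_subset_Ioi_self) ?_
      rw [← eLpNorm_pow f p hpP hp0 hpt, ← lintegral_const_mul _ (by unfold w; fun_prop)]
      refine setLIntegral_mono_ae (by unfold w; fun_prop) ?_
      refine Filter.Eventually.of_forall fun t ht => ?_
      rw [w, ← mul_assoc, ← ENNReal.ofReal_mul (by positivity)]
      have h2pi : (2*Real.pi)⁻¹ * (2 * Real.pi * t) = t := by
        field_simp
      rw [h2pi]
    calc _ ≤ (ENNReal.ofReal ((2*Real.pi)⁻¹) * N ^ P) ^ (1/P) :=
          ENNReal.rpow_le_rpow (e1 ▸ e2) (by positivity)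
      _ = ENNReal.ofReal ((2*Real.pi)⁻¹) ^ (1/P) * N := by
          rw [ENNReal.mul_rpow_of_nonneg _ _ (by positivity), ← ENNReal.rpow_mul,
            mul_one_div, div_self hP0', ENNReal.rpow_one]
  have step3 : (∫⁻ t in Ioc (0:ℝ) r, (ENNReal.ofReal (t ^ (1 - 1/P))) ^ (P/(P-1))) ^ (1/(P/(P-1)))
      = ENNReal.ofReal ((r^2/2) ^ (1 - 1/P)) := by
    have e1 : ∫⁻ t in Ioc (0:ℝ) r, (ENNReal.ofReal (t ^ (1 - 1/P))) ^ (P/(P-1))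
        = ∫⁻ t in Ioc (0:ℝ) r, ENNReal.ofReal t := by
      refine setLIntegral_congr_fun measurableSet_Ioc (fun t ht => ?_)
      rw [ENNReal.ofReal_rpow_of_pos (Real.rpow_pos_of_pos ht.1 _), ← Real.rpow_mul ht.1.le]
      rw [show (1 - 1/P) * (P/(P-1)) = 1 by field_simp, Real.rpow_one]
    rw [e1, lintegral_t r hr.le, ENNReal.ofReal_rpow_of_pos (by positivity),
      show (1:ℝ)/(P/(P-1)) = 1 - 1/P by field_simp]
  calc Phi f r ≤ _ := step1
    _ ≤ (ENNReal.ofReal ((2*Real.pi)⁻¹) ^ (1/P) * N) * ENNReal.ofReal ((r^2/2) ^ (1 - 1/P)) := by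
        rw [step3]; exact mul_le_mul_left step2 _
    _ = ENNReal.ofReal ((2*Real.pi)⁻¹ ^ (1/P) * (r^2/2) ^ (1 - 1/P)) * N := by
        rw [ENNReal.ofReal_rpow_of_pos (by positivity), mul_right_comm,
          ← ENNReal.ofReal_mul (by positivity)]
    _ = ENNReal.ofReal ((2*Real.pi)⁻¹ ^ (1/P) * 2⁻¹ ^ (1 - 1/P))
          * ENNReal.ofReal (r ^ (2 * (1 - 1/P))) * N := by
        rw [← ENNReal.ofReal_mul (by positivity)]
        congr 2
        rw [show r^2/2 = r^(2:ℝ) * 2⁻¹ by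
            rw [show r ^ (2:ℝ) = r^2 from by rw [← Real.rpow_natCast r 2]; norm_num]; ring,
          Real.mul_rpow (by positivity) (by norm_num), ← Real.rpow_mul hr.le]
        ring


lemma holder_phi_one (f : ℝ → ℂ) (hf : Measurable f) (r : ℝ) :
    Phi f r ≤ ENNReal.ofReal (2*Real.pi)⁻¹ * eLpNorm f 1 rmeas := by
  have h1 : Phi f r ≤ ∫⁻ t in Ioi (0:ℝ), ENNReal.ofReal t * ‖f t‖₊ :=
    lintegral_mono_set Ioc_subset_Ioi_self
  rw [eLpNorm_one_eq_lintegral_enorm, lintegral_rmeas]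
  refine h1.trans ?_
  rw [← lintegral_const_mul _ (by unfold w; fun_prop)]
  refine setLIntegral_mono_ae (by unfold w; fun_prop)
    (Filter.Eventually.of_forall fun t ht => ?_)
  rw [w, ← mul_assoc, ← ENNReal.ofReal_mul (by positivity),
    show (2*Real.pi)⁻¹ * (2*Real.pi*t) = t by field_simp, enorm_eq_nnnorm]

lemma holder_phi_top (f : ℝ → ℂ) {r : ℝ} (hr : 0 < r) :
    Phi f r ≤ ENNReal.ofReal (r^2/2) * eLpNorm f ∞ rmeas := by
  set N := eLpNorm f ∞ rmeas with hN
  have hae : ∀ᵐ t ∂(volume.restrict (Ioi (0:ℝ))), (‖f t‖₊ : ℝ≥0∞) ≤ N := by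
    have h := ae_le_eLpNormEssSup (f := f) (μ := rmeas)
    rw [hN, eLpNorm_exponent_top]
    exact Filter.Eventually.filter_mono restrict_ac.ae_le h
  have hae' : ∀ᵐ t ∂(volume.restrict (Ioc (0:ℝ) r)), (‖f t‖₊:ℝ≥0∞) ≤ N :=
    ae_restrict_of_ae_restrict_of_subset Ioc_subset_Ioi_self hae
  calc Phi f r ≤ ∫⁻ t in Ioc (0:ℝ) r, ENNReal.ofReal t * N :=
        lintegral_mono_ae (hae'.mono fun t ht => mul_le_mul_right ht _)
    _ = ENNReal.ofReal (r^2/2) * N := by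
        rw [lintegral_mul_const _ (by fun_prop), lintegral_t r hr.le]

lemma lintegral_pow_Ici (P t : ℝ) (hP : 1 < P) (ht : 0 < t) :
    ∫⁻ r in Ici t, ENNReal.ofReal (2 * Real.pi * r ^ (-P))
      = ENNReal.ofReal (2 * Real.pi * (t ^ (1-P) / (P-1))) := by
  rw [← Measure.restrict_congr_set Ioi_ae_eq_Ici]
  rw [← ofReal_integral_eq_lintegral_ofReal]
  · congr 1
    rw [integral_const_mul, integral_Ioi_rpow_of_lt (by linarith) ht]
    rw [show -P + 1 = 1 - P by ring]
    congr 1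
    rw [div_eq_div_iff (by linarith : (1:ℝ) - P ≠ 0) (by linarith : P - (1:ℝ) ≠ 0)]
    ring
  · exact (integrableOn_Ioi_rpow_of_lt (by linarith) ht).const_mul _
  · refine (ae_restrict_mem measurableSet_Ioi).mono fun x hx => ?_
    have : (0:ℝ) < x := ht.trans hx
    positivity

lemma swap_lemma (g h : ℝ → ℝ≥0∞) (hg : Measurable g) (hh : Measurable h) :
    ∫⁻ r in Ioi (0:ℝ), g r * ∫⁻ t in Ioc (0:ℝ) r, h t
      = ∫⁻ t in Ioi (0:ℝ), h t * ∫⁻ r in Ici t, g r := by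
  set F : ℝ → ℝ → ℝ≥0∞ := fun r t => if t ≤ r then g r * h t else 0 with hF
  have hFm : Measurable (Function.uncurry F) := by
    refine Measurable.ite (measurableSet_le measurable_snd measurable_fst) ?_ measurable_const
    exact (hg.comp measurable_fst).mul (hh.comp measurable_snd)
  have e1 : ∀ r : ℝ, g r * ∫⁻ t in Ioc (0:ℝ) r, h t = ∫⁻ t in Ioi (0:ℝ), F r t := by
    intro r
    have h2 : ∫⁻ t in Ioi (0:ℝ), F r t
        = ∫⁻ t in Ioi (0:ℝ), (Iic r).indicator (fun t => g r * h t) t := by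
      refine lintegral_congr fun t => ?_
      by_cases h' : t ≤ r <;> simp [hF, Set.indicator, h']
    rw [h2, lintegral_indicator measurableSet_Iic,
      Measure.restrict_restrict measurableSet_Iic, inter_comm, Ioi_inter_Iic,
      lintegral_const_mul _ hh]
  have e3 : ∀ t ∈ Ioi (0:ℝ), ∫⁻ r in Ioi (0:ℝ), F r t = h t * ∫⁻ r in Ici t, g r := by
    intro t ht
    have h2 : ∫⁻ r in Ioi (0:ℝ), F r t
        = ∫⁻ r in Ioi (0:ℝ), (Ici t).indicator (fun r => g r * h t) r := by
      refine lintegral_congr fun r => ?_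
      by_cases h' : t ≤ r <;> simp [hF, Set.indicator, h']
    have hset : Ici t ∩ Ioi (0:ℝ) = Ici t :=
      inter_eq_left.mpr fun x hx => show (0:ℝ) < x from lt_of_lt_of_le ht hx
    rw [h2, lintegral_indicator measurableSet_Ici,
      Measure.restrict_restrict measurableSet_Ici, hset,
      lintegral_mul_const _ hg, mul_comm]
  calc ∫⁻ r in Ioi (0:ℝ), g r * ∫⁻ t in Ioc (0:ℝ) r, h t
      = ∫⁻ r in Ioi (0:ℝ), ∫⁻ t in Ioi (0:ℝ), F r t := lintegral_congr e1
    _ = ∫⁻ t in Ioi (0:ℝ), ∫⁻ r in Ioi (0:ℝ), F r t :=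
        lintegral_lintegral_swap hFm.aemeasurable
    _ = ∫⁻ t in Ioi (0:ℝ), h t * ∫⁻ r in Ici t, g r :=
        setLIntegral_congr_fun measurableSet_Ioi e3

lemma engine_top (f : ℝ → ℂ) (s : ℝ) (A : ℝ) (N : ℝ≥0∞)
    (hb : ∀ r : ℝ, 0 < r → Phi f r ≤ ENNReal.ofReal A * ENNReal.ofReal (r ^ s) * N) :
    eLpNorm (fun r : ℝ => ((r ^ (-s) : ℝ) : ℂ) * ∫ t in (0:ℝ)..r, (t:ℂ) * f t) ∞ rmeas
      ≤ ENNReal.ofReal A * N := by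
  rw [eLpNorm_exponent_top]
  refine essSup_le_of_ae_le _ ?_
  refine Filter.Eventually.filter_mono (withDensity_absolutelyContinuous _ _).ae_le ?_
  refine (ae_restrict_iff' measurableSet_Ioi).2 (Filter.Eventually.of_forall fun r hr => ?_)
  calc (‖((r ^ (-s) : ℝ) : ℂ) * ∫ t in (0:ℝ)..r, (t:ℂ) * f t‖₊ : ℝ≥0∞)
      ≤ ENNReal.ofReal (r ^ (-s)) * Phi f r := enorm_T_le f s r hr
    _ ≤ ENNReal.ofReal (r ^ (-s)) * (ENNReal.ofReal A * ENNReal.ofReal (r ^ s) * N) :=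
        mul_le_mul_right (hb r hr) _
    _ = (ENNReal.ofReal (r ^ (-s)) * ENNReal.ofReal (r ^ s)) * (ENNReal.ofReal A * N) := by
        ring
    _ = ENNReal.ofReal A * N := by
        rw [← ENNReal.ofReal_mul (Real.rpow_nonneg hr.le _), ← Real.rpow_add hr,
          neg_add_cancel, Real.rpow_zero, ENNReal.ofReal_one, one_mul]


lemma engine_lt (f : ℝ → ℂ) (hf : Measurable f) (p q : ℝ≥0∞) (s P Q : ℝ)
    (hP : 1 < P) (hPQ : P ≤ Q) (hpP : p.toReal = P) (hqQ : q.toReal = Q)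
    (hp0 : p ≠ 0) (hpt : p ≠ ∞) (hq0 : q ≠ 0) (hqt : q ≠ ∞)
    (hrel : s * Q = 2 + 2 * Q - 2 * Q / P) :
    eLpNorm (fun r : ℝ => ((r ^ (-s) : ℝ) : ℂ) * ∫ t in (0:ℝ)..r, (t : ℂ) * f t) q rmeas
      ≤ ENNReal.ofReal (((2*Real.pi)⁻¹ ^ (1/P) * 2⁻¹ ^ (1 - 1/P)) ^ ((Q - P)/Q)
          * (P-1)⁻¹ ^ (1/Q)) * eLpNorm f p rmeas := by
  have hP0 : (0:ℝ) < P := by linarith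
  have hQ0 : (0:ℝ) < Q := by linarith
  have hQP : (0:ℝ) ≤ Q - P := by linarith
  set A : ℝ := (2*Real.pi)⁻¹ ^ (1/P) * 2⁻¹ ^ (1 - 1/P) with hA
  have hApos : 0 < A := by positivity
  set N := eLpNorm f p rmeas with hNdef
  set M := ∫⁻ t in Ioi (0:ℝ), w t * (‖f t‖₊ : ℝ≥0∞) ^ P with hMdef
  have hMN : M = N ^ P := eLpNorm_pow f p hpP hp0 hpt
  set g : ℝ → ℝ≥0∞ := fun r => ENNReal.ofReal (2 * Real.pi * r ^ (-P)) with hgdef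
  set h : ℝ → ℝ≥0∞ := fun t => ENNReal.ofReal (t ^ P) * (‖f t‖₊ : ℝ≥0∞) ^ P with hhdef
  have hgm : Measurable g := by rw [hgdef]; fun_prop
  have hhm : Measurable h := by rw [hhdef]; fun_prop
  set K : ℝ≥0∞ := (ENNReal.ofReal A * N) ^ (Q - P) with hK
  set T : ℝ → ℂ := fun r : ℝ => ((r ^ (-s) : ℝ) : ℂ) * ∫ t in (0:ℝ)..r, (t : ℂ) * f t with hT
  set e2 : ℝ := (2*(1 - 1/P))*(Q - P) with he2
  have hexp : 1 + -s*Q + (P-1) + e2 = -P := by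
    have hu : -s*Q = -(2 + 2*Q - 2*Q/P) := by rw [neg_mul, hrel]
    rw [hu, he2]
    field_simp
    ring
  -- pointwise key bound
  have key : ∀ r ∈ Ioi (0:ℝ),
      w r * (‖T r‖₊ : ℝ≥0∞) ^ Q ≤ K * (g r * ∫⁻ t in Ioc (0:ℝ) r, h t) := by
    intro r hr
    have hr' : (0:ℝ) < r := hr
    have hmul : ∀ x y : ℝ, ENNReal.ofReal (r ^ x) * ENNReal.ofReal (r ^ y)
        = ENNReal.ofReal (r ^ (x+y)) := fun x y => by
      rw [← ENNReal.ofReal_mul (Real.rpow_nonneg hr'.le _), ← Real.rpow_add hr']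
    have hpow : ∀ x y : ℝ, ENNReal.ofReal (r ^ x) ^ y = ENNReal.ofReal (r ^ (x*y)) :=
      fun x y => by
      rw [ENNReal.ofReal_rpow_of_pos (Real.rpow_pos_of_pos hr' _), ← Real.rpow_mul hr'.le]
    have hsplit : Phi f r ^ Q = Phi f r ^ P * Phi f r ^ (Q - P) := by
      rw [← ENNReal.rpow_add_of_nonneg _ _ hP0.le hQP]
      congr 1; ring
    have s1 : (‖T r‖₊ : ℝ≥0∞) ^ Q ≤ (ENNReal.ofReal (r ^ (-s)) * Phi f r) ^ Q :=
      ENNReal.rpow_le_rpow (enorm_T_le f s r hr') hQ0.le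
    have s2 : (ENNReal.ofReal (r ^ (-s)) * Phi f r) ^ Q
        = ENNReal.ofReal (r ^ (-s*Q)) * (Phi f r ^ P * Phi f r ^ (Q - P)) := by
      rw [ENNReal.mul_rpow_of_nonneg _ _ hQ0.le, hpow, hsplit]
    have s4 : Phi f r ^ P ≤ (∫⁻ t in Ioc (0:ℝ) r, h t) * ENNReal.ofReal (r ^ (P-1)) :=
      phi_pow_le f hf hP hr'
    have s3 : Phi f r ^ (Q - P) ≤ (ENNReal.ofReal A * N) ^ (Q - P)
        * ENNReal.ofReal (r ^ e2) := by
      calc Phi f r ^ (Q-P)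
          ≤ (ENNReal.ofReal A * ENNReal.ofReal (r ^ (2*(1 - 1/P))) * N) ^ (Q-P) :=
            ENNReal.rpow_le_rpow (holder_phi f hf p hP hpP hp0 hpt hr') hQP
        _ = _ := by
            rw [mul_right_comm, ENNReal.mul_rpow_of_nonneg _ _ hQP, hpow, he2]
    have hw : w r = ENNReal.ofReal (2*Real.pi) * ENNReal.ofReal (r ^ (1:ℝ)) := by
      rw [Real.rpow_one, show w r = ENNReal.ofReal (2 * Real.pi * r) from rfl,
        ← ENNReal.ofReal_mul (by positivity)]
    have hgr : g r = ENNReal.ofReal (2*Real.pi) * ENNReal.ofReal (r ^ (-P)) := by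
      rw [hgdef, ← ENNReal.ofReal_mul (by positivity)]
    have hrpow : ENNReal.ofReal (r^(1:ℝ)) * ENNReal.ofReal (r^(-s*Q))
        * ENNReal.ofReal (r^(P-1)) * ENNReal.ofReal (r^e2)
        = ENNReal.ofReal (r^(-P:ℝ)) := by
      rw [hmul, hmul, hmul, hexp]
    calc w r * (‖T r‖₊ : ℝ≥0∞) ^ Q
        ≤ w r * (ENNReal.ofReal (r ^ (-s*Q)) * (Phi f r ^ P * Phi f r ^ (Q - P))) :=
          mul_le_mul_right (s1.trans_eq s2) _
      _ ≤ w r * (ENNReal.ofReal (r ^ (-s*Q))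
            * (((∫⁻ t in Ioc (0:ℝ) r, h t) * ENNReal.ofReal (r ^ (P-1)))
              * ((ENNReal.ofReal A * N) ^ (Q - P) * ENNReal.ofReal (r ^ e2)))) :=
          mul_le_mul_right (mul_le_mul_right (mul_le_mul' s4 s3) _) _
      _ = K * (g r * ∫⁻ t in Ioc (0:ℝ) r, h t) := by
          rw [hw, hgr, hK, ← hrpow]
          ring
  -- integrate
  have hinner : Measurable fun r : ℝ => ∫⁻ t in Ioc (0:ℝ) r, h t := by
    have hmono : Monotone fun r : ℝ => ∫⁻ t in Ioc (0:ℝ) r, h t :=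
      fun a b hab => lintegral_mono_set (Ioc_subset_Ioc_right hab)
    exact hmono.measurable
  have I1 : ∫⁻ r in Ioi (0:ℝ), w r * (‖T r‖₊ : ℝ≥0∞) ^ Q
      ≤ K * ∫⁻ r in Ioi (0:ℝ), g r * ∫⁻ t in Ioc (0:ℝ) r, h t := by
    rw [← lintegral_const_mul K (f := fun r => g r * ∫⁻ t in Ioc (0:ℝ) r, h t) (hgm.mul hinner)]
    exact setLIntegral_mono_ae (measurable_const.mul (hgm.mul hinner)).aemeasurable
      (Filter.Eventually.of_forall key)
  have I3 : ∫⁻ t in Ioi (0:ℝ), h t * ∫⁻ r in Ici t, g r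
      = ENNReal.ofReal ((P-1)⁻¹) * M := by
    rw [hMdef, ← lintegral_const_mul _ (by unfold w; fun_prop :
      Measurable fun t : ℝ => w t * (‖f t‖₊ : ℝ≥0∞) ^ P)]
    refine setLIntegral_congr_fun measurableSet_Ioi (fun t ht => ?_)
    have ht' : (0:ℝ) < t := ht
    rw [hgdef]
    rw [lintegral_pow_Ici P t hP ht']
    have hcomb : ENNReal.ofReal (t^P) * ENNReal.ofReal (2*Real.pi*(t^(1-P)/(P-1)))
        = ENNReal.ofReal ((P-1)⁻¹) * ENNReal.ofReal (2*Real.pi*t) := by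
      rw [← ENNReal.ofReal_mul (Real.rpow_nonneg ht'.le _),
        ← ENNReal.ofReal_mul (inv_nonneg.mpr (by linarith : (0:ℝ) ≤ P - 1))]
      congr 1
      rw [show t^P * (2*Real.pi*(t^(1-P)/(P-1))) = t^P * t^(1-P) * (2*Real.pi/(P-1)) by ring,
        ← Real.rpow_add ht', show P + (1-P) = (1:ℝ) by ring, Real.rpow_one]
      ring
    rw [hhdef]
    show ENNReal.ofReal (t ^ P) * (‖f t‖₊ : ℝ≥0∞) ^ P
        * ENNReal.ofReal (2*Real.pi*(t^(1-P)/(P-1)))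
      = ENNReal.ofReal ((P-1)⁻¹) * (w t * (‖f t‖₊ : ℝ≥0∞) ^ P)
    rw [show w t = ENNReal.ofReal (2*Real.pi*t) from rfl, mul_right_comm, hcomb]
    ring
  have hTnorm : eLpNorm T q rmeas = (∫⁻ r in Ioi (0:ℝ), w r * (‖T r‖₊ : ℝ≥0∞) ^ Q)^(1/Q) := by
    rw [eLpNorm_eq_lintegral_rpow_enorm_toReal hq0 hqt, lintegral_rmeas, hqQ]
    rfl
  rw [hTnorm]
  have Ifinal : ∫⁻ r in Ioi (0:ℝ), w r * (‖T r‖₊ : ℝ≥0∞) ^ Q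
      ≤ K * (ENNReal.ofReal ((P-1)⁻¹) * M) := by
    refine I1.trans ?_
    rw [swap_lemma g h hgm hhm, I3]
  calc (∫⁻ r in Ioi (0:ℝ), w r * (‖T r‖₊ : ℝ≥0∞) ^ Q)^(1/Q)
      ≤ (K * (ENNReal.ofReal ((P-1)⁻¹) * M))^(1/Q) :=
        ENNReal.rpow_le_rpow Ifinal (by positivity)
    _ = ENNReal.ofReal (A ^ ((Q - P)/Q) * (P-1)⁻¹ ^ (1/Q)) * N := by
        rw [hK, hMN, ENNReal.mul_rpow_of_nonneg _ _ hQP,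
          show ENNReal.ofReal A ^ (Q-P) * N ^ (Q-P) * (ENNReal.ofReal ((P-1)⁻¹) * N ^ P)
            = (ENNReal.ofReal A ^ (Q-P) * ENNReal.ofReal ((P-1)⁻¹)) * (N ^ (Q-P) * N ^ P)
            from by ring,
          ← ENNReal.rpow_add_of_nonneg _ _ hQP hP0.le,
          ENNReal.mul_rpow_of_nonneg _ _ (by positivity : (0:ℝ) ≤ 1/Q),
          ENNReal.mul_rpow_of_nonneg _ _ (by positivity : (0:ℝ) ≤ 1/Q),
          ← ENNReal.rpow_mul, ← ENNReal.rpow_mul,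
          show (Q - P + P) * (1/Q) = 1 by rw [sub_add_cancel]; field_simp,
          ENNReal.rpow_one, ENNReal.ofReal_rpow_of_pos hApos,
          ENNReal.ofReal_rpow_of_pos (inv_pos.mpr (by linarith : (0:ℝ) < P - 1)),
          ← ENNReal.ofReal_mul (Real.rpow_nonneg hApos.le _), mul_one_div]


end HardyAux

open HardyAux in
/-- Mapping properties for the integral operator `f ↦ r^{-s} ∫₀^r f(r') r' dr'`. -/
theorem integral_operator_bound (p q : ℝ≥0∞) (s : ℝ)
    (hp : 1 ≤ p) (hq : 1 ≤ q) (hs0 : 0 ≤ s) (hs2 : s ≤ 2)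
    (hcond : (p = 1 ∧ q = ∞ ∧ s = 0) ∨
      (1 < p ∧ 1 / q + 1 = 1 / p + ENNReal.ofReal (s / 2))) :
    ∃ C : ℝ, 0 < C ∧ ∀ f : ℝ → ℂ, Measurable f →
      eLpNorm (fun r : ℝ => ((r ^ (-s) : ℝ) : ℂ) * ∫ t in (0:ℝ)..r, (t : ℂ) * f t) q rmeas
        ≤ ENNReal.ofReal C * eLpNorm f p rmeas := by
  rcases hcond with ⟨hp1, hqi, hs00⟩ | ⟨hp1, heq⟩
  · -- p = 1, q = ∞, s = 0
    subst hp1 hqi hs00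
    refine ⟨(2*Real.pi)⁻¹, by positivity, fun f hf => ?_⟩
    refine HardyAux.engine_top f 0 (2*Real.pi)⁻¹ (eLpNorm f 1 rmeas) fun r hr => ?_
    rw [Real.rpow_zero, ENNReal.ofReal_one, mul_one]
    exact HardyAux.holder_phi_one f hf r
  · have hp0 : p ≠ 0 := by
      intro h; rw [h] at hp1; simp at hp1
    have hq0 : q ≠ 0 := by
      intro h; rw [h] at hq; simp at hq
    have hreal : (1/q).toReal + 1 = (1/p).toReal + s/2 := by
      have h1 : (1/q + 1).toReal = (1/p + ENNReal.ofReal (s/2)).toReal := by rw [heq]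
      rw [ENNReal.toReal_add (by simp [one_div, ENNReal.inv_ne_top, hq0]) ENNReal.one_ne_top,
        ENNReal.toReal_add (by simp [one_div, ENNReal.inv_ne_top, hp0]) ENNReal.ofReal_ne_top,
        ENNReal.toReal_one, ENNReal.toReal_ofReal (by linarith)] at h1
      exact h1
    by_cases hqt : q = ∞
    · by_cases hpt : p = ∞
      · -- p = q = ∞, s = 2
        have hs : s = 2 := by
          rw [hqt, hpt] at hreal
          simp at hreal
          linarith
        subst hqt hpt hs
        refine ⟨1/2, by norm_num, fun f hf => ?_⟩
        refine HardyAux.engine_top f 2 (1/2) (eLpNorm f ∞ rmeas) fun r hr => ?_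
        rw [show ENNReal.ofReal (1/2) * ENNReal.ofReal (r ^ (2:ℝ))
            = ENNReal.ofReal (r^2/2) from by
          rw [← ENNReal.ofReal_mul (by norm_num),
            show (1/2:ℝ) * r^(2:ℝ) = r^2/2 from by
              rw [show r^(2:ℝ) = r^2 from by rw [← Real.rpow_natCast r 2]; norm_num]
              ring]]
        exact HardyAux.holder_phi_top f hr
      · -- 1 < p < ∞, q = ∞
        set P := p.toReal with hPdef
        have hP : 1 < P := by
          rw [hPdef, ← ENNReal.toReal_one]
          exact (ENNReal.toReal_lt_toReal ENNReal.one_ne_top hpt).mpr hp1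
        have hs : s = 2*(1 - 1/P) := by
          rw [hqt] at hreal
          simp at hreal
          rw [hPdef, one_div]
          linarith [hreal]
        subst hqt
        refine ⟨(2*Real.pi)⁻¹ ^ (1/P) * 2⁻¹ ^ (1 - 1/P), by positivity, fun f hf => ?_⟩
        refine HardyAux.engine_top f s _ (eLpNorm f p rmeas) fun r hr => ?_
        rw [hs]
        exact HardyAux.holder_phi f hf p hP rfl hp0 hpt hr
    · -- q < ∞
      have hpt : p ≠ ∞ := by
        intro hpt
        rw [hpt] at hreal
        simp at hreal
        have hQpos : 0 < q.toReal⁻¹ := inv_pos.mpr (ENNReal.toReal_pos hq0 hqt)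
        linarith [hs2]
      set P := p.toReal with hPdef
      set Q := q.toReal with hQdef
      have hP : 1 < P := by
        rw [hPdef, ← ENNReal.toReal_one]
        exact (ENNReal.toReal_lt_toReal ENNReal.one_ne_top hpt).mpr hp1
      have hQpos : 0 < Q := ENNReal.toReal_pos hq0 hqt
      have hrel' : 1/Q + 1 = 1/P + s/2 := by
        rw [one_div, one_div, ← ENNReal.toReal_inv, ← ENNReal.toReal_inv, ← one_div, ← one_div]
        exact hreal
      have hPQ : P ≤ Q := by
        have h1 : 1/Q ≤ 1/P := by linarith
        exact le_of_one_div_le_one_div hQpos h1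
      have hrel2 : s * Q = 2 + 2*Q - 2*Q/P := by
        field_simp at hrel' ⊢
        nlinarith [hrel']
      refine ⟨((2*Real.pi)⁻¹ ^ (1/P) * 2⁻¹ ^ (1 - 1/P)) ^ ((Q - P)/Q) * (P-1)⁻¹ ^ (1/Q),
        mul_pos (Real.rpow_pos_of_pos (by positivity) _)
          (Real.rpow_pos_of_pos (inv_pos.mpr (by linarith)) _), fun f hf => ?_⟩
      exact HardyAux.engine_lt f hf p q s P Q hP hPQ rfl rfl hp0 hpt hq0 hqt hrel2
end

section
/- Let 1 ≤ p, q ≤ ∞ with 1/p + 1/q = 1 and (p,q) ≠ (1,∞). Then there is a constant C = C(p) > 0 such that for all measurable ψ₁, ψ₂, ψ₃, ψ₄ : (0,∞) → ℂ, |M_{4,1}(ψ₁,ψ₂,ψ₃,ψ₄)| ≤ C ‖ψ₁ψ₂‖_{L^p} ‖ψ₃ψ₄‖_{L^q} whenever the right-hand side is finite. Moreover, for any 1 ≤ p, q ≤ ∞ with 1/p + 1/q = 1, |M_{4,0}(ψ₁,ψ₂,ψ₃,ψ₄)| ≤ ‖ψ₁ψ₂‖_{L^p} ‖ψ₃ψ₄‖_{L^q}.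 -/
open MeasureTheory Set
open scoped ENNReal

/-- `Re(conj ψ₁ ψ₂)(r)`. -/
noncomputable def Re2 (ψ₁ ψ₂ : ℝ → ℂ) (r : ℝ) : ℝ := ((starRingEnd ℂ) (ψ₁ r) * ψ₂ r).re

/-- `A_θ[ψ₁,ψ₂](r) = -(1/2)∫₀^r Re(conj ψ₁ ψ₂)(r') r' dr'`. -/
noncomputable def Atheta2 (ψ₁ ψ₂ : ℝ → ℂ) (r : ℝ) : ℝ :=
  -(1/2) * ∫ t in (0:ℝ)..r, Re2 ψ₁ ψ₂ t * t

/-- `M_{4,0}(ψ₁,ψ₂,ψ₃,ψ₄) = -(1/4)·2π∫₀^∞ Re(conj ψ₁ ψ₂) Re(conj ψ₃ ψ₄) r dr`. -/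
noncomputable def M40 (ψ₁ ψ₂ ψ₃ ψ₄ : ℝ → ℂ) : ℝ :=
  -(1/4) * (2 * Real.pi * ∫ r in Set.Ioi (0:ℝ), Re2 ψ₁ ψ₂ r * Re2 ψ₃ ψ₄ r * r)

/-- `M_{4,1}(ψ₁,ψ₂,ψ₃,ψ₄) = 2π∫₀^∞ r^{-2} A_θ[ψ₁,ψ₂](r) Re(conj ψ₃ ψ₄)(r) r dr`. -/
noncomputable def M41 (ψ₁ ψ₂ ψ₃ ψ₄ : ℝ → ℂ) : ℝ :=
  2 * Real.pi * ∫ r in Set.Ioi (0:ℝ), (r ^ 2)⁻¹ * Atheta2 ψ₁ ψ₂ r * Re2 ψ₃ ψ₄ r * r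


lemma conj_cases (p q : ℝ≥0∞) (hp : 1 ≤ p) (hq : 1 ≤ q) (hpq : 1 / p + 1 / q = 1) :
    (p = 1 ∧ q = ∞) ∨ (p = ∞ ∧ q = 1) ∨
    (1 < p ∧ p ≠ ∞ ∧ 1 < q ∧ q ≠ ∞ ∧ p.toReal.HolderConjugate q.toReal) := by
  have hp0 : p ≠ 0 := by intro h; simp [h] at hp
  have hq0 : q ≠ 0 := by intro h; simp [h] at hq
  by_cases hp1 : p = 1
  · left; refine ⟨hp1, ?_⟩
    rw [hp1] at hpq; simp at hpq
    have : q⁻¹ = 0 := by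
      by_contra h
      exact absurd hpq (by simpa using (ENNReal.lt_add_right (by norm_num : (1:ℝ≥0∞) ≠ ∞) h).ne')
    simpa [ENNReal.inv_eq_zero] using this
  by_cases hpt : p = ∞
  · right; left; refine ⟨hpt, ?_⟩
    rw [hpt] at hpq; simp at hpq
    exact hpq
  · right; right
    have hplt : 1 < p := lt_of_le_of_ne hp (Ne.symm hp1)
    have hinvp : 1 / p < 1 := by
      rw [one_div]; exact ENNReal.inv_lt_one.mpr hplt
    have hinvq : 1 / q ≠ 0 := by
      intro h; rw [h, add_zero] at hpq; exact absurd hpq hinvp.ne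
    have hqt : q ≠ ∞ := by simpa [one_div, ENNReal.inv_eq_zero] using hinvq
    have hqlt : 1 < q := by
      by_contra h
      push_neg at h
      have hq1 : q = 1 := le_antisymm h hq
      rw [hq1] at hpq; simp at hpq
      have : p⁻¹ = 0 := by
        by_contra h
        have := ENNReal.lt_add_right (a := (1:ℝ≥0∞)) (by norm_num) h
        rw [add_comm] at this
        exact absurd hpq (by simpa using this.ne')
      exact hpt ((ENNReal.inv_eq_zero).mp this)
    have hsum : p.toReal⁻¹ + q.toReal⁻¹ = 1 := by
      have := congrArg ENNReal.toReal hpq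
      rwa [ENNReal.toReal_add (by simp [one_div, ENNReal.inv_ne_top, hp0])
        (by simp [one_div, ENNReal.inv_ne_top, hq0]), one_div, one_div,
        ENNReal.toReal_inv, ENNReal.toReal_inv, ENNReal.toReal_one] at this
    refine ⟨hplt, hpt, hqlt, hqt, ⟨by rw [inv_one]; exact hsum, ENNReal.toReal_pos hp0 hpt, ?_⟩⟩
    exact ENNReal.toReal_pos hq0 hqt


lemma holder_nnnorm {α : Type*} [MeasurableSpace α] (μ : Measure α)
    (p q : ℝ≥0∞) (hp : 1 ≤ p) (hq : 1 ≤ q) (hpq : 1 / p + 1 / q = 1)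
    (hcase : (p = 1 ∧ q = ∞) ∨ (p = ∞ ∧ q = 1) ∨
      (1 < p ∧ p ≠ ∞ ∧ 1 < q ∧ q ≠ ∞ ∧ p.toReal.HolderConjugate q.toReal))
    (f g : α → ℂ) (hf : AEMeasurable f μ) (hg : AEMeasurable g μ) :
    ∫⁻ x, (‖f x‖₊ : ℝ≥0∞) * ‖g x‖₊ ∂μ ≤ eLpNorm f p μ * eLpNorm g q μ := by
  rcases hcase with ⟨hp1, hqt⟩ | ⟨hpt, hq1⟩ | ⟨_, hpt, _, hqt, hconj⟩
  · subst hp1 hqt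
    rw [eLpNorm_one_eq_lintegral_enorm, eLpNorm_exponent_top]
    calc ∫⁻ x, (‖f x‖₊ : ℝ≥0∞) * ‖g x‖₊ ∂μ
        ≤ ∫⁻ x, (‖f x‖₊ : ℝ≥0∞) * eLpNormEssSup g μ ∂μ := by
          refine lintegral_mono_ae ?_
          filter_upwards [ae_le_eLpNormEssSup (f := g) (μ := μ)] with x hx
          exact mul_le_mul_right hx _
      _ = (∫⁻ x, (‖f x‖₊ : ℝ≥0∞) ∂μ) * eLpNormEssSup g μ :=
          lintegral_mul_const'' _ hf.enorm
  · subst hpt hq1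
    rw [eLpNorm_one_eq_lintegral_enorm, eLpNorm_exponent_top]
    calc ∫⁻ x, (‖f x‖₊ : ℝ≥0∞) * ‖g x‖₊ ∂μ
        ≤ ∫⁻ x, eLpNormEssSup f μ * ‖g x‖₊ ∂μ := by
          refine lintegral_mono_ae ?_
          filter_upwards [ae_le_eLpNormEssSup (f := f) (μ := μ)] with x hx
          exact mul_le_mul_left hx _
      _ = eLpNormEssSup f μ * ∫⁻ x, (‖g x‖₊ : ℝ≥0∞) ∂μ :=
          lintegral_const_mul'' _ hg.enorm
  · rw [eLpNorm_eq_lintegral_rpow_enorm_toReal (by positivity) hpt,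
      eLpNorm_eq_lintegral_rpow_enorm_toReal (by positivity) hqt]
    exact ENNReal.lintegral_mul_le_Lp_mul_Lq μ hconj hf.enorm hg.enorm

lemma Re2_abs_le (ψ₁ ψ₂ : ℝ → ℂ) (r : ℝ) : |Re2 ψ₁ ψ₂ r| ≤ ‖ψ₁ r * ψ₂ r‖ := by
  refine le_trans (Complex.abs_re_le_norm _) ?_
  simp [norm_mul]

lemma ofReal_abs_integral_le (s : Set ℝ) (h : ℝ → ℝ) :
    ENNReal.ofReal |∫ x in s, h x| ≤ ∫⁻ x in s, ENNReal.ofReal |h x| := by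
  rw [← Real.enorm_eq_ofReal_abs]
  refine le_trans (enorm_integral_le_lintegral_enorm _) (le_of_eq ?_)
  simp_rw [Real.enorm_eq_ofReal_abs]

lemma rmeas_lintegral (φ : ℝ → ℝ≥0∞) (hφ : Measurable φ) :
    ∫⁻ r, φ r ∂rmeas = ∫⁻ r in Set.Ioi (0:ℝ), ENNReal.ofReal (2 * Real.pi * r) * φ r := by
  rw [rmeas, lintegral_withDensity_eq_lintegral_mul _ (by fun_prop) hφ]
  rfl

lemma Atheta2_ofReal_le (ψ₁ ψ₂ : ℝ → ℂ) {r : ℝ} (hr : 0 ≤ r) :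
    ENNReal.ofReal |Atheta2 ψ₁ ψ₂ r| ≤
      2⁻¹ * ∫⁻ t in Set.Ioc 0 r, ENNReal.ofReal (‖ψ₁ t * ψ₂ t‖ * t) := by
  rw [Atheta2, abs_mul, intervalIntegral.integral_of_le hr]
  have h12 : |(-(1/2) : ℝ)| = 2⁻¹ := by norm_num
  rw [h12, ENNReal.ofReal_mul (by norm_num)]
  have h2 : ENNReal.ofReal (2⁻¹ : ℝ) = 2⁻¹ := by
    rw [ENNReal.ofReal_inv_of_pos (by norm_num)]; norm_num
  rw [h2]
  refine mul_le_mul_right ?_ _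
  refine le_trans (ofReal_abs_integral_le _ _) ?_
  refine lintegral_mono_ae ?_
  filter_upwards [ae_restrict_mem measurableSet_Ioc] with t ht
  refine ENNReal.ofReal_le_ofReal ?_
  rw [abs_mul, abs_of_nonneg ht.1.le]
  exact mul_le_mul_of_nonneg_right (Re2_abs_le _ _ _) ht.1.le

lemma tail_lintegral {pb : ℝ} (hpb : 1 < pb) {t : ℝ} (ht : 0 < t) :
    ∫⁻ r in Set.Ici t, ENNReal.ofReal (r ^ (-pb)) =
      ENNReal.ofReal (t ^ (1 - pb) / (pb - 1)) := by
  rw [← MeasureTheory.restrict_Ioi_eq_restrict_Ici]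
  rw [← MeasureTheory.ofReal_integral_eq_lintegral_ofReal
    (integrableOn_Ioi_rpow_of_lt (by linarith) ht)
    (by
      filter_upwards [ae_restrict_mem measurableSet_Ioi] with x hx
      exact Real.rpow_nonneg (le_of_lt (ht.trans hx)) _)]
  rw [integral_Ioi_rpow_of_lt (by linarith) ht]
  congr 1
  have h1 : -pb + 1 = -(pb - 1) := by ring
  rw [h1]
  rw [neg_div_neg_eq, ← neg_neg (pb - 1)]
  ring_nf

lemma M41_case_mid (p q : ℝ≥0∞) (hp0 : p ≠ 0) (hq0 : q ≠ 0) (hpt : p ≠ ∞) (hqt : q ≠ ∞)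
    (hconj : p.toReal.HolderConjugate q.toReal)
    (ψ₁ ψ₂ ψ₃ ψ₄ : ℝ → ℂ) (h₁ : Measurable ψ₁) (h₂ : Measurable ψ₂)
    (h₃ : Measurable ψ₃) (h₄ : Measurable ψ₄) :
    ENNReal.ofReal |M41 ψ₁ ψ₂ ψ₃ ψ₄| ≤
      (ENNReal.ofReal (2 * Real.pi) * 2⁻¹ *
        (ENNReal.ofReal ((p.toReal - 1)⁻¹) * (ENNReal.ofReal (2 * Real.pi))⁻¹) ^ (1 / p.toReal) *
        ((ENNReal.ofReal (2 * Real.pi))⁻¹) ^ (1 / q.toReal)) *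
      eLpNorm (fun r => ψ₁ r * ψ₂ r) p rmeas * eLpNorm (fun r => ψ₃ r * ψ₄ r) q rmeas := by
  have h2pi : (0:ℝ) < 2 * Real.pi := by positivity
  have h2pine : ENNReal.ofReal (2 * Real.pi) ≠ 0 := by
    simp [ENNReal.ofReal_eq_zero, not_le, h2pi, Real.pi_pos]
  set pb := p.toReal with hpb_def
  set qb := q.toReal with hqb_def
  have hpb1 : 1 < pb := hconj.lt
  have hqb1 : 1 < qb := hconj.symm.lt
  have hpb0 : pb ≠ 0 := by linarith
  have hqb0 : qb ≠ 0 := by linarith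
  set F : ℝ → ℂ := fun r => ψ₁ r * ψ₂ r with hF_def
  set G : ℝ → ℂ := fun r => ψ₃ r * ψ₄ r with hG_def
  have hFm : Measurable F := h₁.mul h₂
  have hGm : Measurable G := h₃.mul h₄
  set ν : Measure ℝ := volume.restrict (Set.Ioi (0:ℝ)) with hν_def
  set S : Set (ℝ × ℝ) := {z | z.1 ∈ Set.Ioc 0 z.2} with hS_def
  have hS : MeasurableSet S := by
    have : S = {z : ℝ × ℝ | 0 < z.1} ∩ {z | z.1 ≤ z.2} := by
      ext z; simp [hS_def, Set.mem_Ioc]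
    rw [this]
    exact (measurableSet_lt measurable_const measurable_fst).inter
      (measurableSet_le measurable_fst measurable_snd)
  set U : ℝ × ℝ → ℝ≥0∞ :=
    S.indicator (fun z => ENNReal.ofReal (‖F z.1‖ * z.1 * z.2⁻¹)) with hU_def
  set V : ℝ × ℝ → ℝ≥0∞ := S.indicator (fun z => ENNReal.ofReal ‖G z.2‖) with hV_def
  have hUm : Measurable U := by
    refine Measurable.indicator ?_ hS
    fun_prop
  have hVm : Measurable V := by
    refine Measurable.indicator ?_ hS
    fun_prop
  set Np := eLpNorm F p rmeas with hNp_def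
  set Nq := eLpNorm G q rmeas with hNq_def
  -- Tonelli for U * V
  have tonelli : ∫⁻ z, U z * V z ∂(ν.prod ν) =
      ∫⁻ r in Set.Ioi (0:ℝ),
        (∫⁻ t in Set.Ioc (0:ℝ) r, ENNReal.ofReal (‖F t‖ * t)) *
          (ENNReal.ofReal r⁻¹ * ENNReal.ofReal ‖G r‖) := by
    rw [lintegral_prod_symm' (fun z => U z * V z) (hUm.mul hVm)]
    refine lintegral_congr_ae ?_
    filter_upwards [ae_restrict_mem measurableSet_Ioi] with r hr
    have hUV : ∀ t, U (t, r) * V (t, r) = (Set.Ioc (0:ℝ) r).indicator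
        (fun t => ENNReal.ofReal (‖F t‖ * t) *
          (ENNReal.ofReal r⁻¹ * ENNReal.ofReal ‖G r‖)) t := by
      intro t
      by_cases ht : t ∈ Set.Ioc (0:ℝ) r
      · have hz : ((t, r) : ℝ × ℝ) ∈ S := ht
        simp only [hU_def, hV_def, Set.indicator_of_mem hz,
          Set.indicator_of_mem ht]
        rw [ENNReal.ofReal_mul (mul_nonneg (norm_nonneg _) ht.1.le)]
        ring
      · have hz : ((t, r) : ℝ × ℝ) ∉ S := ht
        simp only [hU_def, hV_def, Set.indicator_of_notMem hz,
          Set.indicator_of_notMem ht, zero_mul]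
    simp_rw [hUV]
    rw [lintegral_indicator measurableSet_Ioc, hν_def,
      Measure.restrict_restrict measurableSet_Ioc,
      Set.inter_eq_self_of_subset_left Set.Ioc_subset_Ioi_self,
      lintegral_mul_const' _ _ (by finiteness)]
  -- pointwise bound and reduction to U * V
  have key : ∫⁻ r in Set.Ioi (0:ℝ),
      ENNReal.ofReal |(r ^ 2)⁻¹ * Atheta2 ψ₁ ψ₂ r * Re2 ψ₃ ψ₄ r * r| ≤
      2⁻¹ * ∫⁻ z, U z * V z ∂(ν.prod ν) := by
    rw [tonelli, ← lintegral_const_mul' _ _ (by finiteness)]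
    refine lintegral_mono_ae ?_
    filter_upwards [ae_restrict_mem measurableSet_Ioi] with r hr
    have hr0 : (0:ℝ) < r := hr
    have habs : |(r ^ 2)⁻¹ * Atheta2 ψ₁ ψ₂ r * Re2 ψ₃ ψ₄ r * r| =
        r⁻¹ * |Atheta2 ψ₁ ψ₂ r| * |Re2 ψ₃ ψ₄ r| := by
      rw [abs_mul, abs_mul, abs_mul, abs_of_nonneg (by positivity : (0:ℝ) ≤ (r^2)⁻¹),
        abs_of_nonneg hr0.le]
      field_simp
    rw [habs, ENNReal.ofReal_mul (by positivity), ENNReal.ofReal_mul (by positivity)]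
    calc ENNReal.ofReal r⁻¹ * ENNReal.ofReal |Atheta2 ψ₁ ψ₂ r| *
          ENNReal.ofReal |Re2 ψ₃ ψ₄ r|
        ≤ ENNReal.ofReal r⁻¹ *
            (2⁻¹ * ∫⁻ t in Set.Ioc (0:ℝ) r, ENNReal.ofReal (‖F t‖ * t)) *
            ENNReal.ofReal ‖G r‖ := by
          refine mul_le_mul' (mul_le_mul' le_rfl (Atheta2_ofReal_le _ _ hr0.le)) ?_
          exact ENNReal.ofReal_le_ofReal (by rw [← Real.norm_eq_abs] at *; exact Re2_abs_le _ _ _)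
      _ = 2⁻¹ * ((∫⁻ t in Set.Ioc (0:ℝ) r, ENNReal.ofReal (‖F t‖ * t)) *
            (ENNReal.ofReal r⁻¹ * ENNReal.ofReal ‖G r‖)) := by ring
  -- V computation
  have hVq : ∀ z : ℝ × ℝ, V z ^ qb =
      S.indicator (fun z => ENNReal.ofReal (‖G z.2‖ ^ qb)) z := by
    intro z
    by_cases hz : z ∈ S
    · simp only [hV_def, Set.indicator_of_mem hz]
      exact ENNReal.ofReal_rpow_of_nonneg (norm_nonneg _) (by linarith)
    · simp only [hV_def, Set.indicator_of_notMem hz]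
      exact ENNReal.zero_rpow_of_pos (by linarith)
  have hVint : ∫⁻ z, V z ^ qb ∂(ν.prod ν) =
      ∫⁻ r in Set.Ioi (0:ℝ), ENNReal.ofReal (‖G r‖ ^ qb) * ENNReal.ofReal r := by
    simp_rw [hVq]
    rw [lintegral_prod_symm' (S.indicator fun z => ENNReal.ofReal (‖G z.2‖ ^ qb))
      (Measurable.indicator (by fun_prop) hS)]
    refine lintegral_congr_ae ?_
    filter_upwards [ae_restrict_mem measurableSet_Ioi] with r hr
    have hind : ∀ t, S.indicator (fun z => ENNReal.ofReal (‖G z.2‖ ^ qb)) (t, r) =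
        (Set.Ioc (0:ℝ) r).indicator (fun _ => ENNReal.ofReal (‖G r‖ ^ qb)) t := by
      intro t
      by_cases ht : t ∈ Set.Ioc (0:ℝ) r
      · rw [Set.indicator_of_mem (show ((t, r) : ℝ × ℝ) ∈ S from ht),
          Set.indicator_of_mem ht]
      · rw [Set.indicator_of_notMem (show ((t, r) : ℝ × ℝ) ∉ S from ht),
          Set.indicator_of_notMem ht]
    simp_rw [hind]
    rw [lintegral_indicator measurableSet_Ioc, setLIntegral_const, hν_def,
      Measure.restrict_apply measurableSet_Ioc,
      Set.inter_eq_self_of_subset_left Set.Ioc_subset_Ioi_self, Real.volume_Ioc, sub_zero]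
  have hNq_pow : Nq ^ qb = ENNReal.ofReal (2 * Real.pi) *
      ∫⁻ r in Set.Ioi (0:ℝ), ENNReal.ofReal (‖G r‖ ^ qb) * ENNReal.ofReal r := by
    rw [hNq_def, eLpNorm_eq_lintegral_rpow_enorm_toReal hq0 hqt, ← ENNReal.rpow_mul,
      one_div_mul_cancel hqb0, ENNReal.rpow_one]
    rw [rmeas_lintegral _ (by fun_prop)]
    rw [← lintegral_const_mul' _ _ ENNReal.ofReal_ne_top]
    refine lintegral_congr_ae ?_
    filter_upwards [ae_restrict_mem measurableSet_Ioi] with r hr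
    have hr0 : (0:ℝ) < r := hr
    rw [ENNReal.ofReal_mul h2pi.le, ← ofReal_norm,
      ENNReal.ofReal_rpow_of_nonneg (norm_nonneg _) (by linarith)]
    ring
  have hVfinal : (∫⁻ z, V z ^ qb ∂(ν.prod ν)) ^ (1 / qb) =
      ((ENNReal.ofReal (2 * Real.pi))⁻¹) ^ (1 / qb) * Nq := by
    have h1 : ∫⁻ z, V z ^ qb ∂(ν.prod ν) = (ENNReal.ofReal (2 * Real.pi))⁻¹ * Nq ^ qb := by
      rw [hVint, hNq_pow, ← mul_assoc, ENNReal.inv_mul_cancel h2pine ENNReal.ofReal_ne_top,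
        one_mul]
    rw [h1, ENNReal.mul_rpow_of_nonneg _ _ (by positivity), ← ENNReal.rpow_mul,
      mul_one_div, div_self hqb0, ENNReal.rpow_one]
  -- U computation
  have hUp : ∀ z : ℝ × ℝ, U z ^ pb = S.indicator
      (fun z => ENNReal.ofReal ((‖F z.1‖ * z.1) ^ pb * z.2 ^ (-pb))) z := by
    intro z
    by_cases hz : z ∈ S
    · have h1 : (0:ℝ) < z.1 := hz.1
      have h2' : (0:ℝ) < z.2 := lt_of_lt_of_le h1 hz.2
      simp only [hU_def, Set.indicator_of_mem hz]
      rw [ENNReal.ofReal_rpow_of_nonneg (by positivity) (by linarith)]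
      congr 1
      rw [Real.mul_rpow (by positivity) (by positivity), Real.rpow_neg h2'.le,
        Real.inv_rpow h2'.le]
    · simp only [hU_def, Set.indicator_of_notMem hz]
      exact ENNReal.zero_rpow_of_pos (by linarith)
  have hUint : ∫⁻ z, U z ^ pb ∂(ν.prod ν) = ENNReal.ofReal ((pb - 1)⁻¹) *
      ∫⁻ t in Set.Ioi (0:ℝ), ENNReal.ofReal (‖F t‖ ^ pb * t) := by
    simp_rw [hUp]
    rw [lintegral_prod _ (Measurable.indicator (by fun_prop) hS).aemeasurable]
    rw [← lintegral_const_mul' _ _ ENNReal.ofReal_ne_top]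
    refine lintegral_congr_ae ?_
    filter_upwards [ae_restrict_mem measurableSet_Ioi] with t ht
    have ht0 : (0:ℝ) < t := ht
    have hind : ∀ r', S.indicator
        (fun z => ENNReal.ofReal ((‖F z.1‖ * z.1) ^ pb * z.2 ^ (-pb))) (t, r') =
        (Set.Ici t).indicator
          (fun r' => ENNReal.ofReal ((‖F t‖ * t) ^ pb) * ENNReal.ofReal (r' ^ (-pb))) r' := by
      intro r'
      by_cases hr' : r' ∈ Set.Ici t
      · rw [Set.indicator_of_mem (show ((t, r') : ℝ × ℝ) ∈ S from ⟨ht0, hr'⟩),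
          Set.indicator_of_mem hr', ← ENNReal.ofReal_mul (by positivity)]
      · rw [Set.indicator_of_notMem (show ((t, r') : ℝ × ℝ) ∉ S from fun h => hr' h.2),
          Set.indicator_of_notMem hr']
    simp_rw [hind]
    rw [lintegral_indicator measurableSet_Ici, hν_def,
      Measure.restrict_restrict measurableSet_Ici,
      Set.inter_eq_self_of_subset_left
        (show Set.Ici t ⊆ Set.Ioi 0 from fun x hx => lt_of_lt_of_le ht0 hx),
      lintegral_const_mul' _ _ ENNReal.ofReal_ne_top, tail_lintegral hpb1 ht0]
    rw [← ENNReal.ofReal_mul (by positivity),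
      ← ENNReal.ofReal_mul (inv_nonneg.mpr (by linarith))]
    congr 1
    rw [Real.mul_rpow (norm_nonneg _) ht0.le]
    have hcollapse : t ^ pb * t ^ (1 - pb) = t := by
      rw [← Real.rpow_add ht0, show pb + (1 - pb) = 1 by ring, Real.rpow_one]
    have hring : ‖F t‖ ^ pb * t ^ pb * (t ^ (1 - pb) * (pb - 1)⁻¹) =
        (pb - 1)⁻¹ * (‖F t‖ ^ pb * (t ^ pb * t ^ (1 - pb))) := by ring
    rw [div_eq_mul_inv, hring, hcollapse]
  have hNp_pow : Np ^ pb = ENNReal.ofReal (2 * Real.pi) *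
      ∫⁻ t in Set.Ioi (0:ℝ), ENNReal.ofReal (‖F t‖ ^ pb * t) := by
    rw [hNp_def, eLpNorm_eq_lintegral_rpow_enorm_toReal hp0 hpt, ← ENNReal.rpow_mul,
      one_div_mul_cancel hpb0, ENNReal.rpow_one]
    rw [rmeas_lintegral _ (by fun_prop)]
    rw [← lintegral_const_mul' _ _ ENNReal.ofReal_ne_top]
    refine lintegral_congr_ae ?_
    filter_upwards [ae_restrict_mem measurableSet_Ioi] with t ht
    have ht0 : (0:ℝ) < t := ht
    rw [ENNReal.ofReal_mul h2pi.le, ← ofReal_norm,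
      ENNReal.ofReal_rpow_of_nonneg (norm_nonneg _) (by linarith),
      ENNReal.ofReal_mul (by positivity : (0:ℝ) ≤ ‖ψ₁ t * ψ₂ t‖ ^ p.toReal)]
    ring
  have hUfinal : (∫⁻ z, U z ^ pb ∂(ν.prod ν)) ^ (1 / pb) =
      (ENNReal.ofReal ((pb - 1)⁻¹) * (ENNReal.ofReal (2 * Real.pi))⁻¹) ^ (1 / pb) * Np := by
    have h1 : ∫⁻ z, U z ^ pb ∂(ν.prod ν) =
        (ENNReal.ofReal ((pb - 1)⁻¹) * (ENNReal.ofReal (2 * Real.pi))⁻¹) * Np ^ pb := by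
      rw [hUint, hNp_pow, mul_assoc, ← mul_assoc (ENNReal.ofReal (2 * Real.pi))⁻¹,
        ENNReal.inv_mul_cancel h2pine ENNReal.ofReal_ne_top, one_mul]
    rw [h1, ENNReal.mul_rpow_of_nonneg _ _ (by positivity), ← ENNReal.rpow_mul,
      mul_one_div, div_self hpb0, ENNReal.rpow_one]
  -- conclusion
  have hold : ∫⁻ z, U z * V z ∂(ν.prod ν) ≤
      (∫⁻ z, U z ^ pb ∂(ν.prod ν)) ^ (1 / pb) * (∫⁻ z, V z ^ qb ∂(ν.prod ν)) ^ (1 / qb) :=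
    ENNReal.lintegral_mul_le_Lp_mul_Lq (ν.prod ν) hconj hUm.aemeasurable hVm.aemeasurable
  calc ENNReal.ofReal |M41 ψ₁ ψ₂ ψ₃ ψ₄|
      = ENNReal.ofReal (2 * Real.pi) *
        ENNReal.ofReal |∫ r in Set.Ioi (0:ℝ),
          (r ^ 2)⁻¹ * Atheta2 ψ₁ ψ₂ r * Re2 ψ₃ ψ₄ r * r| := by
        rw [M41, abs_mul, abs_of_nonneg h2pi.le, ENNReal.ofReal_mul h2pi.le]
    _ ≤ ENNReal.ofReal (2 * Real.pi) * (2⁻¹ * ∫⁻ z, U z * V z ∂(ν.prod ν)) :=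
        mul_le_mul_right ((ofReal_abs_integral_le _ _).trans key) _
    _ ≤ ENNReal.ofReal (2 * Real.pi) * (2⁻¹ *
          ((∫⁻ z, U z ^ pb ∂(ν.prod ν)) ^ (1 / pb) *
            (∫⁻ z, V z ^ qb ∂(ν.prod ν)) ^ (1 / qb))) :=
        mul_le_mul_right (mul_le_mul_right hold _) _
    _ = (ENNReal.ofReal (2 * Real.pi) * 2⁻¹ *
          (ENNReal.ofReal ((pb - 1)⁻¹) * (ENNReal.ofReal (2 * Real.pi))⁻¹) ^ (1 / pb) *
          ((ENNReal.ofReal (2 * Real.pi))⁻¹) ^ (1 / qb)) * Np * Nq := by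
        rw [hUfinal, hVfinal]
        ring

lemma M41_case_top (ψ₁ ψ₂ ψ₃ ψ₄ : ℝ → ℂ) (h₁ : Measurable ψ₁) (h₂ : Measurable ψ₂)
    (h₃ : Measurable ψ₃) (h₄ : Measurable ψ₄) :
    ENNReal.ofReal |M41 ψ₁ ψ₂ ψ₃ ψ₄| ≤
      eLpNorm (fun r => ψ₁ r * ψ₂ r) ∞ rmeas * eLpNorm (fun r => ψ₃ r * ψ₄ r) 1 rmeas := by
  have h2pi : (0:ℝ) < 2 * Real.pi := by positivity
  set F : ℝ → ℂ := fun r => ψ₁ r * ψ₂ r with hF_def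
  set G : ℝ → ℂ := fun r => ψ₃ r * ψ₄ r with hG_def
  have hGm : Measurable G := h₃.mul h₄
  set NF := eLpNorm F ∞ rmeas with hNF_def
  -- a.e. bound on (0,∞) w.r.t. Lebesgue
  have hae : ∀ᵐ t ∂(volume.restrict (Set.Ioi (0:ℝ))), ENNReal.ofReal ‖F t‖ ≤ NF := by
    have h0 : ∀ᵐ y ∂rmeas, (‖F y‖₊ : ℝ≥0∞) ≤ eLpNormEssSup F rmeas :=
      ae_le_eLpNormEssSup
    rw [rmeas, ae_withDensity_iff (by fun_prop)] at h0
    filter_upwards [h0, ae_restrict_mem measurableSet_Ioi] with t h0t ht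
    have hne : ENNReal.ofReal (2 * Real.pi * t) ≠ 0 := by
      simp only [ne_eq, ENNReal.ofReal_eq_zero, not_le]
      have ht0 : (0:ℝ) < t := ht
      positivity
    rw [ofReal_norm]
    exact le_trans (h0t hne) (le_of_eq (by rw [hNF_def, eLpNorm_exponent_top, rmeas]))
  -- bound on the inner integral
  have hJ : ∀ r : ℝ, 0 < r → ∫⁻ t in Set.Ioc (0:ℝ) r, ENNReal.ofReal (‖F t‖ * t) ≤
      NF * ENNReal.ofReal (r ^ 2 / 2) := by
    intro r hr
    have hmono : ∫⁻ t in Set.Ioc (0:ℝ) r, ENNReal.ofReal (‖F t‖ * t) ≤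
        ∫⁻ t in Set.Ioc (0:ℝ) r, NF * ENNReal.ofReal t := by
      refine lintegral_mono_ae ?_
      filter_upwards [ae_restrict_of_ae_restrict_of_subset Set.Ioc_subset_Ioi_self hae,
        ae_restrict_mem measurableSet_Ioc] with t h1t h2t
      rw [ENNReal.ofReal_mul (norm_nonneg _)]
      exact mul_le_mul_left h1t _
    refine hmono.trans ?_
    rw [lintegral_const_mul'' _ (by fun_prop)]
    refine mul_le_mul_right (le_of_eq ?_) _
    rw [← MeasureTheory.ofReal_integral_eq_lintegral_ofReal
      (by
        apply Continuous.integrableOn_Ioc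
        exact continuous_id)
      (by
        filter_upwards [ae_restrict_mem measurableSet_Ioc] with t ht
        exact ht.1.le)]
    congr 1
    have : ∫ t in Set.Ioc (0:ℝ) r, t = ∫ t in (0:ℝ)..r, t := by
      rw [intervalIntegral.integral_of_le hr.le]
    rw [this, integral_id]
    ring
  -- conclusion
  have hG1 : eLpNorm G 1 rmeas =
      ∫⁻ r in Set.Ioi (0:ℝ), ENNReal.ofReal (2 * Real.pi * r) * ‖G r‖₊ := by
    rw [eLpNorm_one_eq_lintegral_enorm, rmeas_lintegral _ (by fun_prop)]
    rfl
  calc ENNReal.ofReal |M41 ψ₁ ψ₂ ψ₃ ψ₄|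
      = ENNReal.ofReal (2 * Real.pi) *
        ENNReal.ofReal |∫ r in Set.Ioi (0:ℝ),
          (r ^ 2)⁻¹ * Atheta2 ψ₁ ψ₂ r * Re2 ψ₃ ψ₄ r * r| := by
        rw [M41, abs_mul, abs_of_nonneg h2pi.le, ENNReal.ofReal_mul h2pi.le]
    _ ≤ ENNReal.ofReal (2 * Real.pi) * ∫⁻ r in Set.Ioi (0:ℝ),
          ENNReal.ofReal |(r ^ 2)⁻¹ * Atheta2 ψ₁ ψ₂ r * Re2 ψ₃ ψ₄ r * r| :=
        mul_le_mul_right (ofReal_abs_integral_le _ _) _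
    _ ≤ ENNReal.ofReal (2 * Real.pi) * ∫⁻ r in Set.Ioi (0:ℝ),
          NF * ENNReal.ofReal (r / 4) * ENNReal.ofReal ‖G r‖ := by
        refine mul_le_mul_right (lintegral_mono_ae ?_) _
        filter_upwards [ae_restrict_mem measurableSet_Ioi] with r hr
        have hr0 : (0:ℝ) < r := hr
        have habs : |(r ^ 2)⁻¹ * Atheta2 ψ₁ ψ₂ r * Re2 ψ₃ ψ₄ r * r| =
            r⁻¹ * |Atheta2 ψ₁ ψ₂ r| * |Re2 ψ₃ ψ₄ r| := by
          rw [abs_mul, abs_mul, abs_mul, abs_of_nonneg (by positivity : (0:ℝ) ≤ (r^2)⁻¹),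
            abs_of_nonneg hr0.le]
          field_simp
        rw [habs, ENNReal.ofReal_mul (by positivity), ENNReal.ofReal_mul (by positivity)]
        calc ENNReal.ofReal r⁻¹ * ENNReal.ofReal |Atheta2 ψ₁ ψ₂ r| *
              ENNReal.ofReal |Re2 ψ₃ ψ₄ r|
            ≤ ENNReal.ofReal r⁻¹ * (2⁻¹ * (NF * ENNReal.ofReal (r ^ 2 / 2))) *
              ENNReal.ofReal ‖G r‖ := by
              refine mul_le_mul' (mul_le_mul' le_rfl
                ((Atheta2_ofReal_le _ _ hr0.le).trans (mul_le_mul_right (hJ r hr0) _))) ?_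
              exact ENNReal.ofReal_le_ofReal
                (by rw [← Real.norm_eq_abs] at *; exact Re2_abs_le _ _ _)
          _ = NF * ENNReal.ofReal (r / 4) * ENNReal.ofReal ‖G r‖ := by
              have h2 : (2:ℝ≥0∞)⁻¹ = ENNReal.ofReal 2⁻¹ := by
                rw [ENNReal.ofReal_inv_of_pos (by norm_num)]; norm_num
              have hc : ENNReal.ofReal r⁻¹ *
                  (ENNReal.ofReal 2⁻¹ * ENNReal.ofReal (r ^ 2 / 2)) =
                  ENNReal.ofReal (r / 4) := by
                rw [← ENNReal.ofReal_mul (by positivity), ← ENNReal.ofReal_mul (by positivity)]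
                congr 1
                field_simp
                ring
              rw [h2]
              calc ENNReal.ofReal r⁻¹ * (ENNReal.ofReal 2⁻¹ * (NF * ENNReal.ofReal (r ^ 2 / 2))) *
                    ENNReal.ofReal ‖G r‖
                  = NF * (ENNReal.ofReal r⁻¹ *
                      (ENNReal.ofReal 2⁻¹ * ENNReal.ofReal (r ^ 2 / 2))) *
                      ENNReal.ofReal ‖G r‖ := by ring
                _ = NF * ENNReal.ofReal (r / 4) * ENNReal.ofReal ‖G r‖ := by rw [hc]
    _ = 4⁻¹ * (NF * eLpNorm G 1 rmeas) := by
        rw [hG1, ← lintegral_const_mul' _ _ ENNReal.ofReal_ne_top]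
        rw [← lintegral_const_mul'' _ ((by fun_prop : Measurable fun r =>
          ENNReal.ofReal (2 * Real.pi * r) * (‖G r‖₊ : ℝ≥0∞)).aemeasurable)]
        rw [← lintegral_const_mul'' _ ((by fun_prop : Measurable fun r =>
          NF * (ENNReal.ofReal (2 * Real.pi * r) * (‖G r‖₊ : ℝ≥0∞))).aemeasurable)]
        refine lintegral_congr_ae ?_
        filter_upwards [ae_restrict_mem measurableSet_Ioi] with r hr
        have hr0 : (0:ℝ) < r := hr
        have h4 : (4:ℝ≥0∞)⁻¹ = ENNReal.ofReal 4⁻¹ := by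
          rw [ENNReal.ofReal_inv_of_pos (by norm_num)]; norm_num
        rw [← enorm_eq_nnnorm, ← ofReal_norm, h4]
        have hs : ENNReal.ofReal (2 * Real.pi) *
            (ENNReal.ofReal (r / 4) * ENNReal.ofReal ‖G r‖) =
            ENNReal.ofReal 4⁻¹ * ENNReal.ofReal (2 * Real.pi * r * ‖G r‖) := by
          rw [← ENNReal.ofReal_mul (by positivity), ← ENNReal.ofReal_mul (by positivity),
            ← ENNReal.ofReal_mul (by norm_num)]
          congr 1
          ring
        calc ENNReal.ofReal (2 * Real.pi) * (NF * ENNReal.ofReal (r / 4) * ENNReal.ofReal ‖G r‖)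
            = NF * (ENNReal.ofReal (2 * Real.pi) *
                (ENNReal.ofReal (r / 4) * ENNReal.ofReal ‖G r‖)) := by ring
          _ = NF * (ENNReal.ofReal 4⁻¹ * ENNReal.ofReal (2 * Real.pi * r * ‖G r‖)) := by
              rw [hs]
          _ = ENNReal.ofReal 4⁻¹ * (NF * ENNReal.ofReal (2 * Real.pi * r * ‖G r‖)) := by ring
          _ = ENNReal.ofReal 4⁻¹ *
              (NF * (ENNReal.ofReal (2 * Real.pi * r) * ENNReal.ofReal ‖G r‖)) := by
              rw [ENNReal.ofReal_mul (by positivity : (0:ℝ) ≤ 2 * Real.pi * r)]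
    _ ≤ 1 * (NF * eLpNorm G 1 rmeas) := mul_le_mul_left (by norm_num) _
    _ = eLpNorm F ∞ rmeas * eLpNorm G 1 rmeas := by rw [one_mul, hNF_def]

lemma M40_le (ψ₁ ψ₂ ψ₃ ψ₄ : ℝ → ℂ) (h₁ : Measurable ψ₁) (h₂ : Measurable ψ₂)
    (h₃ : Measurable ψ₃) (h₄ : Measurable ψ₄) :
    ENNReal.ofReal |M40 ψ₁ ψ₂ ψ₃ ψ₄| ≤
      4⁻¹ * ∫⁻ r, (‖ψ₁ r * ψ₂ r‖₊ : ℝ≥0∞) * ‖ψ₃ r * ψ₄ r‖₊ ∂rmeas := by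
  have h2pi : (0:ℝ) ≤ 2 * Real.pi := by positivity
  have habs : |M40 ψ₁ ψ₂ ψ₃ ψ₄| =
      4⁻¹ * (2 * Real.pi * |∫ r in Set.Ioi (0:ℝ), Re2 ψ₁ ψ₂ r * Re2 ψ₃ ψ₄ r * r|) := by
    rw [M40, abs_mul, abs_mul]
    rw [abs_of_nonneg h2pi]
    norm_num
  rw [habs, ENNReal.ofReal_mul (by norm_num), ENNReal.ofReal_mul h2pi]
  rw [rmeas_lintegral _ (by
    exact ((h₁.mul h₂).nnnorm.coe_nnreal_ennreal).mul ((h₃.mul h₄).nnnorm.coe_nnreal_ennreal))]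
  have hofi : ENNReal.ofReal (4:ℝ)⁻¹ = (4:ℝ≥0∞)⁻¹ := by
    rw [ENNReal.ofReal_inv_of_pos (by norm_num)]
    norm_num
  rw [hofi]
  refine mul_le_mul_right ?_ _
  refine le_trans (mul_le_mul_right (ofReal_abs_integral_le _ _) _) ?_
  rw [← lintegral_const_mul' _ _ ENNReal.ofReal_ne_top]
  refine lintegral_mono_ae ?_
  filter_upwards [ae_restrict_mem measurableSet_Ioi] with r hr
  have hr0 : (0:ℝ) < r := hr
  calc ENNReal.ofReal (2 * Real.pi) * ENNReal.ofReal |Re2 ψ₁ ψ₂ r * Re2 ψ₃ ψ₄ r * r|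
      ≤ ENNReal.ofReal (2 * Real.pi) *
        ENNReal.ofReal ((‖ψ₁ r * ψ₂ r‖ * ‖ψ₃ r * ψ₄ r‖) * r) := by
        refine mul_le_mul_right (ENNReal.ofReal_le_ofReal ?_) _
        rw [abs_mul, abs_mul, abs_of_nonneg hr0.le]
        refine mul_le_mul_of_nonneg_right ?_ hr0.le
        exact mul_le_mul (Re2_abs_le _ _ _) (Re2_abs_le _ _ _) (abs_nonneg _) (norm_nonneg _)
    _ = ENNReal.ofReal (2 * Real.pi * r) * ((‖ψ₁ r * ψ₂ r‖₊ : ℝ≥0∞) * ‖ψ₃ r * ψ₄ r‖₊) := by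
        rw [← ENNReal.ofReal_mul h2pi, ← enorm_eq_nnnorm, ← ofReal_norm, ← enorm_eq_nnnorm, ← ofReal_norm,
          ← ENNReal.ofReal_mul (norm_nonneg _), ← ENNReal.ofReal_mul (by positivity)]
        ring_nf

/-- Duality estimates (Hölder-type) for `M_{4,1}` and `M_{4,0}`. -/
theorem duality_estimates_M4 (p q : ℝ≥0∞) (hp : 1 ≤ p) (hq : 1 ≤ q)
    (hpq : 1 / p + 1 / q = 1) :
    (¬(p = 1 ∧ q = ∞) →
      ∃ C : ℝ, 0 < C ∧ ∀ ψ₁ ψ₂ ψ₃ ψ₄ : ℝ → ℂ,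
        Measurable ψ₁ → Measurable ψ₂ → Measurable ψ₃ → Measurable ψ₄ →
        ENNReal.ofReal |M41 ψ₁ ψ₂ ψ₃ ψ₄| ≤
          ENNReal.ofReal C * eLpNorm (fun r => ψ₁ r * ψ₂ r) p rmeas *
            eLpNorm (fun r => ψ₃ r * ψ₄ r) q rmeas) ∧
    (∀ ψ₁ ψ₂ ψ₃ ψ₄ : ℝ → ℂ,
        Measurable ψ₁ → Measurable ψ₂ → Measurable ψ₃ → Measurable ψ₄ →
        ENNReal.ofReal |M40 ψ₁ ψ₂ ψ₃ ψ₄| ≤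
          eLpNorm (fun r => ψ₁ r * ψ₂ r) p rmeas *
            eLpNorm (fun r => ψ₃ r * ψ₄ r) q rmeas) := by
  constructor
  · intro hne
    rcases conj_cases p q hp hq hpq with ⟨hp1, hqt⟩ | ⟨hpt, hq1⟩ |
      ⟨hplt, hpt, hqlt, hqt, hconj⟩
    · exact absurd ⟨hp1, hqt⟩ hne
    · refine ⟨1, one_pos, ?_⟩
      intro ψ₁ ψ₂ ψ₃ ψ₄ h₁ h₂ h₃ h₄
      subst hpt hq1
      rw [ENNReal.ofReal_one, one_mul]
      exact M41_case_top ψ₁ ψ₂ ψ₃ ψ₄ h₁ h₂ h₃ h₄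
    · set D : ℝ≥0∞ := ENNReal.ofReal (2 * Real.pi) * 2⁻¹ *
        (ENNReal.ofReal ((p.toReal - 1)⁻¹) * (ENNReal.ofReal (2 * Real.pi))⁻¹) ^ (1 / p.toReal) *
        ((ENNReal.ofReal (2 * Real.pi))⁻¹) ^ (1 / q.toReal) with hD_def
    -- the constant is finite
      have h2pine : ENNReal.ofReal (2 * Real.pi) ≠ 0 := by
        simp only [ne_eq, ENNReal.ofReal_eq_zero, not_le]
        positivity
      have hDne : D ≠ ∞ := by
        rw [hD_def]
        refine ENNReal.mul_ne_top (ENNReal.mul_ne_top (ENNReal.mul_ne_top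
          ENNReal.ofReal_ne_top (by norm_num)) ?_) ?_
        · exact ENNReal.rpow_ne_top_of_nonneg (by positivity)
            (ENNReal.mul_ne_top ENNReal.ofReal_ne_top (ENNReal.inv_ne_top.mpr h2pine))
        · exact ENNReal.rpow_ne_top_of_nonneg (by positivity)
            (ENNReal.inv_ne_top.mpr h2pine)
      refine ⟨D.toReal + 1, by positivity, ?_⟩
      intro ψ₁ ψ₂ ψ₃ ψ₄ h₁ h₂ h₃ h₄
      refine le_trans (M41_case_mid p q (by positivity) (by positivity) hpt hqt hconj
        ψ₁ ψ₂ ψ₃ ψ₄ h₁ h₂ h₃ h₄) ?_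
      have hD : D ≤ ENNReal.ofReal (D.toReal + 1) := by
        calc D = ENNReal.ofReal D.toReal := (ENNReal.ofReal_toReal hDne).symm
          _ ≤ ENNReal.ofReal (D.toReal + 1) := ENNReal.ofReal_le_ofReal (by linarith)
      exact mul_le_mul_left (mul_le_mul_left hD _) _
  · intro ψ₁ ψ₂ ψ₃ ψ₄ h₁ h₂ h₃ h₄
    refine le_trans (M40_le ψ₁ ψ₂ ψ₃ ψ₄ h₁ h₂ h₃ h₄) ?_
    have hH := holder_nnnorm rmeas p q hp hq hpq (conj_cases p q hp hq hpq)
      (fun r => ψ₁ r * ψ₂ r) (fun r => ψ₃ r * ψ₄ r)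
      (h₁.mul h₂).aemeasurable (h₃.mul h₄).aemeasurable
    calc 4⁻¹ * ∫⁻ r, (‖ψ₁ r * ψ₂ r‖₊ : ℝ≥0∞) * ‖ψ₃ r * ψ₄ r‖₊ ∂rmeas
        ≤ 4⁻¹ * (eLpNorm (fun r => ψ₁ r * ψ₂ r) p rmeas *
            eLpNorm (fun r => ψ₃ r * ψ₄ r) q rmeas) := mul_le_mul_right hH _
      _ ≤ 1 * (eLpNorm (fun r => ψ₁ r * ψ₂ r) p rmeas *
            eLpNorm (fun r => ψ₃ r * ψ₄ r) q rmeas) := mul_le_mul_left (by norm_num) _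
      _ = _ := one_mul _
end

section
/- Let k ∈ {0,1,2} and let 1 ≤ p₁, p₂, p₃, p₄ ≤ ∞ satisfy 1/p₁ + 1/p₂ + 1/p₃ + 1/p₄ = 1 with at most one of p₁, …, p₄ equal to ∞. Then there is a constant C = C(p₁,p₂,p₃) > 0 such that for all measurable ψ₁, ψ₂, ψ₃ : (0,∞) → ℂ, ‖N_{3,k}(ψ₁,ψ₂,ψ₃)‖_{L^{p₄'}} ≤ C ‖ψ₁‖_{L^{p₁}} ‖ψ₂‖_{L^{p₂}} ‖ψ₃‖_{L^{p₃}}, where p₄' is the Hölder conjugate of p₄ (1/p₄' = 1 − 1/p₄). -/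
open MeasureTheory Set
open scoped ENNReal

/-- The cubic nonlinearities `N_{3,0}`, `N_{3,1}`, `N_{3,2}`. -/
noncomputable def N3 (k : ℕ) (ψ₁ ψ₂ ψ₃ : ℝ → ℂ) (r : ℝ) : ℂ :=
  match k with
  | 0 => -((Re2 ψ₁ ψ₂ r : ℝ) : ℂ) * ψ₃ r
  | 1 => ((2 / r ^ 2 * Atheta2 ψ₁ ψ₂ r : ℝ) : ℂ) * ψ₃ r
  | _ => -(((∫ t in Set.Ioi r, Re2 ψ₁ ψ₂ t / t) : ℝ) : ℂ) * ψ₃ r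


/-- Tonelli-type swap for triangular regions. -/
lemma lintegral_tri_swap (f g : ℝ → ℝ≥0∞) (hf : Measurable f) (hg : Measurable g) :
    ∫⁻ r in Ioi (0:ℝ), f r * ∫⁻ t in Ioo (0:ℝ) r, g t
      = ∫⁻ t in Ioi (0:ℝ), g t * ∫⁻ r in Ioi t, f r := by
  have hset : MeasurableSet {p : ℝ × ℝ | 0 < p.2 ∧ p.2 < p.1} :=
    (measurableSet_lt measurable_const measurable_snd).inter
      (measurableSet_lt measurable_snd measurable_fst)
  set F : ℝ → ℝ → ℝ≥0∞ := fun r t => if 0 < t ∧ t < r then f r * g t else 0 with hF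
  have hFm : Measurable (Function.uncurry F) := by
    have : Function.uncurry F = fun p : ℝ × ℝ =>
        if 0 < p.2 ∧ p.2 < p.1 then f p.1 * g p.2 else 0 := rfl
    rw [this]
    exact Measurable.ite hset ((hf.comp measurable_fst).mul (hg.comp measurable_snd))
      measurable_const
  have h1 : ∀ r : ℝ, ∫⁻ t in Ioi (0:ℝ), F r t = f r * ∫⁻ t in Ioo (0:ℝ) r, g t := by
    intro r
    have : (fun t => F r t) = (Ioo (0:ℝ) r).indicator (fun t => f r * g t) := by
      funext t
      simp only [hF, indicator, mem_Ioo]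
    rw [this, lintegral_indicator measurableSet_Ioo, Measure.restrict_restrict measurableSet_Ioo]
    have : Ioo (0:ℝ) r ∩ Ioi (0:ℝ) = Ioo 0 r := inter_eq_left.2 (fun t ht => ht.1)
    rw [this, lintegral_const_mul _ hg]
  have h2 : ∀ t ∈ Ioi (0:ℝ), ∫⁻ r in Ioi (0:ℝ), F r t = g t * ∫⁻ r in Ioi t, f r := by
    intro t ht
    have : (fun r => F r t) = (Ioi t).indicator (fun r => f r * g t) := by
      funext r
      simp only [hF, indicator, mem_Ioi]
      have ht' : (0:ℝ) < t := ht
      by_cases h : t < r <;> simp [h, ht']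
    rw [this, lintegral_indicator measurableSet_Ioi, Measure.restrict_restrict measurableSet_Ioi]
    have : Ioi t ∩ Ioi (0:ℝ) = Ioi t := inter_eq_left.2 (fun r hr => mem_Ioi.2 (lt_trans (mem_Ioi.1 ht) (mem_Ioi.1 hr)))
    rw [this, lintegral_mul_const _ hf, mul_comm]
  calc ∫⁻ r in Ioi (0:ℝ), f r * ∫⁻ t in Ioo (0:ℝ) r, g t
      = ∫⁻ r in Ioi (0:ℝ), ∫⁻ t in Ioi (0:ℝ), F r t := by
        refine lintegral_congr fun r => (h1 r).symm
    _ = ∫⁻ t in Ioi (0:ℝ), ∫⁻ r in Ioi (0:ℝ), F r t :=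
        lintegral_lintegral_swap hFm.aemeasurable
    _ = ∫⁻ t in Ioi (0:ℝ), g t * ∫⁻ r in Ioi t, f r := by
        refine setLIntegral_congr_fun measurableSet_Ioi ?_
        exact h2

/-- `∫_{Ioi c} r^{-q} dr` as a lintegral. -/
lemma lintegral_Ioi_rpow_neg {q c : ℝ} (hq : 1 < q) (hc : 0 < c) :
    ∫⁻ r in Ioi c, ENNReal.ofReal (r ^ (-q)) = ENNReal.ofReal (c ^ (1 - q) / (q - 1)) := by
  have hint : IntegrableOn (fun r : ℝ => r ^ (-q)) (Ioi c) :=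
    integrableOn_Ioi_rpow_of_lt (by linarith) hc
  rw [← ofReal_integral_eq_lintegral_ofReal hint]
  · rw [integral_Ioi_rpow_of_lt (by linarith) hc]
    congr 1
    rw [show (-q+1 : ℝ) = -(q-1) by ring, div_neg, neg_div, neg_neg,
      show (-(q-1) : ℝ) = 1 - q by ring]
  · filter_upwards [ae_restrict_mem measurableSet_Ioi] with r hr
    exact Real.rpow_nonneg (le_of_lt (lt_trans hc hr)) _

/-- `∫_{Ioo 0 c} r^{-1/2} dr` as a lintegral. -/
lemma lintegral_Ioo_rpow_half {c : ℝ} (hc : 0 < c) :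
    ∫⁻ r in Ioo (0:ℝ) c, ENNReal.ofReal (r ^ (-(1/2) : ℝ)) = ENNReal.ofReal (2 * c ^ ((1/2) : ℝ)) := by
  have hint : IntegrableOn (fun r : ℝ => r ^ (-(1/2) : ℝ)) (Ioo 0 c) := by
    rw [← intervalIntegrable_iff_integrableOn_Ioo_of_le hc.le]
    exact intervalIntegral.intervalIntegrable_rpow' (by norm_num)
  rw [← ofReal_integral_eq_lintegral_ofReal hint]
  · congr 1
    rw [← integral_Ioc_eq_integral_Ioo, ← intervalIntegral.integral_of_le hc.le,
      integral_rpow (Or.inl (by norm_num))]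
    rw [Real.zero_rpow (by norm_num)]
    norm_num
    ring
  · filter_upwards [ae_restrict_mem measurableSet_Ioo] with r hr
    exact Real.rpow_nonneg hr.1.le _


/-- Hardy inequality, first form. -/
lemma hardy1 {q : ℝ} (hq : 1 < q) {h : ℝ → ℝ≥0∞} (hh : Measurable h) :
    ∫⁻ r in Ioi (0:ℝ),
        (ENNReal.ofReal (r ^ (-2 : ℝ)) * ∫⁻ t in Ioo (0:ℝ) r, h t * ENNReal.ofReal t) ^ q
          * ENNReal.ofReal r
      ≤ ENNReal.ofReal (1 / (q - 1)) * ∫⁻ t in Ioi (0:ℝ), h t ^ q * ENNReal.ofReal t := by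
  have hq0 : (0:ℝ) < q := lt_trans one_pos hq
  have hpq : q.HolderConjugate (q / (q - 1)) := Real.HolderConjugate.conjExponent hq
  set p' : ℝ := q / (q - 1) with hp'
  set g : ℝ → ℝ≥0∞ := fun t => (h t * ENNReal.ofReal t) ^ q with hgdef
  have hgm : Measurable g := (hh.mul ENNReal.measurable_ofReal).pow_const _
  -- pointwise bound
  have key : ∀ r ∈ Ioi (0:ℝ),
      (ENNReal.ofReal (r ^ (-2 : ℝ)) * ∫⁻ t in Ioo (0:ℝ) r, h t * ENNReal.ofReal t) ^ q
          * ENNReal.ofReal r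
        ≤ ENNReal.ofReal (r ^ (-q)) * ∫⁻ t in Ioo (0:ℝ) r, g t := by
    intro r hr
    have hr0 : (0:ℝ) < r := hr
    have hold : (∫⁻ t in Ioo (0:ℝ) r, h t * ENNReal.ofReal t)
        ≤ (∫⁻ t in Ioo (0:ℝ) r, g t) ^ (1/q) * (ENNReal.ofReal r) ^ (1/p') := by
      have H := ENNReal.lintegral_mul_le_Lp_mul_Lq (volume.restrict (Ioo (0:ℝ) r)) hpq
        ((hh.mul ENNReal.measurable_ofReal).aemeasurable) (aemeasurable_const (b := (1:ℝ≥0∞)))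
      simpa [ENNReal.one_rpow, setLIntegral_one, Real.volume_Ioo, sub_zero, hgdef] using H
    calc (ENNReal.ofReal (r ^ (-2 : ℝ)) * ∫⁻ t in Ioo (0:ℝ) r, h t * ENNReal.ofReal t) ^ q
          * ENNReal.ofReal r
        ≤ (ENNReal.ofReal (r ^ (-2 : ℝ)) *
            ((∫⁻ t in Ioo (0:ℝ) r, g t) ^ (1/q) * (ENNReal.ofReal r) ^ (1/p'))) ^ q
            * ENNReal.ofReal r := by
          gcongr
      _ = ENNReal.ofReal (r ^ (-q)) * ∫⁻ t in Ioo (0:ℝ) r, g t := by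
          rw [ENNReal.mul_rpow_of_nonneg _ _ hq0.le, ENNReal.mul_rpow_of_nonneg _ _ hq0.le,
            ← ENNReal.rpow_mul, ← ENNReal.rpow_mul, one_div_mul_cancel hq0.ne',
            ENNReal.rpow_one]
          rw [ENNReal.ofReal_rpow_of_pos (Real.rpow_pos_of_pos hr0 _),
            ← Real.rpow_mul hr0.le,
            ENNReal.ofReal_rpow_of_pos hr0,
            show (1/p') * q = q - 1 by rw [← hpq.div_conj_eq_sub_one]; ring]
          have hcomb : ENNReal.ofReal (r ^ ((-2) * q)) * ENNReal.ofReal (r ^ (q - 1))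
              * ENNReal.ofReal r = ENNReal.ofReal (r ^ (-q)) := by
            rw [← ENNReal.ofReal_mul (Real.rpow_nonneg hr0.le _),
              ← ENNReal.ofReal_mul (by positivity), ← Real.rpow_add hr0]
            nth_rewrite 2 [← Real.rpow_one r]
            rw [← Real.rpow_add hr0, show (-2*q + (q-1) + 1 : ℝ) = -q by ring]
          calc ENNReal.ofReal (r ^ ((-2)*q)) *
                ((∫⁻ t in Ioo (0:ℝ) r, g t) * ENNReal.ofReal (r ^ (q-1))) * ENNReal.ofReal r
              = (ENNReal.ofReal (r ^ ((-2)*q)) * ENNReal.ofReal (r ^ (q-1))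
                  * ENNReal.ofReal r) * ∫⁻ t in Ioo (0:ℝ) r, g t := by ring
            _ = ENNReal.ofReal (r ^ (-q)) * ∫⁻ t in Ioo (0:ℝ) r, g t := by rw [hcomb]
  calc ∫⁻ r in Ioi (0:ℝ),
        (ENNReal.ofReal (r ^ (-2 : ℝ)) * ∫⁻ t in Ioo (0:ℝ) r, h t * ENNReal.ofReal t) ^ q
          * ENNReal.ofReal r
      ≤ ∫⁻ r in Ioi (0:ℝ), ENNReal.ofReal (r ^ (-q)) * ∫⁻ t in Ioo (0:ℝ) r, g t := by
        refine lintegral_mono_ae ?_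
        filter_upwards [ae_restrict_mem measurableSet_Ioi] with r hr using key r hr
    _ = ∫⁻ t in Ioi (0:ℝ), g t * ∫⁻ r in Ioi t, ENNReal.ofReal (r ^ (-q)) :=
        lintegral_tri_swap _ _ (measurable_id'.pow_const _).ennreal_ofReal hgm
    _ = ∫⁻ t in Ioi (0:ℝ), ENNReal.ofReal (1/(q-1)) * (h t ^ q * ENNReal.ofReal t) := by
        refine setLIntegral_congr_fun measurableSet_Ioi ?_
        intro t ht
        beta_reduce
        have ht0 : (0:ℝ) < t := ht
        rw [lintegral_Ioi_rpow_neg hq ht0]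
        rw [hgdef]
        simp only []
        rw [ENNReal.mul_rpow_of_nonneg _ _ hq0.le, ENNReal.ofReal_rpow_of_pos ht0,
          div_eq_mul_one_div (t ^ (1-q)) (q-1),
          ENNReal.ofReal_mul (Real.rpow_nonneg ht0.le _)]
        have hcomb2 : ENNReal.ofReal (t ^ q) * ENNReal.ofReal (t ^ (1-q))
            = ENNReal.ofReal t := by
          rw [← ENNReal.ofReal_mul (Real.rpow_nonneg ht0.le _), ← Real.rpow_add ht0,
            show (q + (1-q) : ℝ) = 1 by ring, Real.rpow_one]
        calc h t ^ q * ENNReal.ofReal (t ^ q) *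
              (ENNReal.ofReal (t ^ (1-q)) * ENNReal.ofReal (1/(q-1)))
            = ENNReal.ofReal (1/(q-1)) *
                (h t ^ q * (ENNReal.ofReal (t ^ q) * ENNReal.ofReal (t ^ (1-q)))) := by ring
          _ = ENNReal.ofReal (1/(q-1)) * (h t ^ q * ENNReal.ofReal t) := by rw [hcomb2]
    _ = ENNReal.ofReal (1/(q-1)) * ∫⁻ t in Ioi (0:ℝ), h t ^ q * ENNReal.ofReal t :=
        lintegral_const_mul' _ _ ENNReal.ofReal_ne_top


/-- Hardy inequality, second (dual) form. -/
lemma hardy2 {q : ℝ} (hq : 1 < q) {h : ℝ → ℝ≥0∞} (hh : Measurable h) :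
    ∫⁻ r in Ioi (0:ℝ), (∫⁻ t in Ioi r, h t * ENNReal.ofReal t⁻¹) ^ q * ENNReal.ofReal r
      ≤ ENNReal.ofReal (2 * (3 / (2*(q-1))) ^ (1-q : ℝ))
          * ∫⁻ t in Ioi (0:ℝ), h t ^ q * ENNReal.ofReal t := by
  have hq0 : (0:ℝ) < q := lt_trans one_pos hq
  have hq1 : (0:ℝ) < q - 1 := by linarith
  have hpq : q.HolderConjugate (q / (q - 1)) := Real.HolderConjugate.conjExponent hq
  set p' : ℝ := q / (q - 1) with hp'
  set β : ℝ := 1 / (2*q) with hβ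
  set a : ℝ := (β + 1) * p' with ha
  have ha1 : a - 1 = 3 / (2*(q-1)) := by
    rw [ha, hβ, hp']
    field_simp
    ring
  have haq : 1 < a := by
    have : (0:ℝ) < 3 / (2*(q-1)) := by positivity
    linarith [ha1]
  set fq : ℝ → ℝ≥0∞ := fun t => (h t * ENNReal.ofReal (t ^ β)) ^ q with hfq
  have hfqm : Measurable fq :=
    (hh.mul (measurable_id'.pow_const β).ennreal_ofReal).pow_const _
  set C₁ : ℝ := (a-1) ^ (1-q : ℝ) with hC₁
  have key : ∀ r ∈ Ioi (0:ℝ),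
      (∫⁻ t in Ioi r, h t * ENNReal.ofReal t⁻¹) ^ q * ENNReal.ofReal r
        ≤ ENNReal.ofReal C₁ *
            (ENNReal.ofReal (r ^ (-(1/2) : ℝ)) * ∫⁻ t in Ioi r, fq t) := by
    intro r hr
    have hr0 : (0:ℝ) < r := hr
    -- rewrite integrand
    have hsplit : ∫⁻ t in Ioi r, h t * ENNReal.ofReal t⁻¹
        = ∫⁻ t in Ioi r, (h t * ENNReal.ofReal (t ^ β)) * ENNReal.ofReal (t ^ (-β-1)) := by
      refine setLIntegral_congr_fun measurableSet_Ioi ?_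
      intro t ht
      beta_reduce
      have ht0 : (0:ℝ) < t := lt_trans hr0 ht
      rw [mul_assoc, ← ENNReal.ofReal_mul (Real.rpow_nonneg ht0.le _), ← Real.rpow_add ht0,
        show (β + (-β-1) : ℝ) = -1 by ring, Real.rpow_neg_one]
    have hold : ∫⁻ t in Ioi r, h t * ENNReal.ofReal t⁻¹
        ≤ (∫⁻ t in Ioi r, fq t) ^ (1/q) *
            (ENNReal.ofReal (r ^ (1-a) / (a-1))) ^ (1/p') := by
      rw [hsplit]
      have H := ENNReal.lintegral_mul_le_Lp_mul_Lq (volume.restrict (Ioi r)) hpq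
        (f := fun t => h t * ENNReal.ofReal (t ^ β))
        (g := fun t => ENNReal.ofReal (t ^ (-β-1)))
        ((hh.mul (measurable_id'.pow_const β).ennreal_ofReal).aemeasurable)
        ((measurable_id'.pow_const (-β-1)).ennreal_ofReal.aemeasurable)
      refine le_trans H ?_
      apply le_of_eq
      congr 1
      have : ∫⁻ t in Ioi r, (ENNReal.ofReal (t ^ (-β-1))) ^ p'
          = ENNReal.ofReal (r ^ (1-a) / (a-1)) := by
        rw [← lintegral_Ioi_rpow_neg haq hr0]
        refine setLIntegral_congr_fun measurableSet_Ioi ?_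
        intro t ht
        beta_reduce
        have ht0 : (0:ℝ) < t := lt_trans hr0 ht
        rw [ENNReal.ofReal_rpow_of_pos (Real.rpow_pos_of_pos ht0 _), ← Real.rpow_mul ht0.le,
          show ((-β-1) * p' : ℝ) = -a by rw [ha]; ring]
      rw [this]
    calc (∫⁻ t in Ioi r, h t * ENNReal.ofReal t⁻¹) ^ q * ENNReal.ofReal r
        ≤ ((∫⁻ t in Ioi r, fq t) ^ (1/q) *
            (ENNReal.ofReal (r ^ (1-a) / (a-1))) ^ (1/p')) ^ q * ENNReal.ofReal r := by
          gcongr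
      _ = ENNReal.ofReal C₁ *
            (ENNReal.ofReal (r ^ (-(1/2) : ℝ)) * ∫⁻ t in Ioi r, fq t) := by
          rw [ENNReal.mul_rpow_of_nonneg _ _ hq0.le, ← ENNReal.rpow_mul, ← ENNReal.rpow_mul,
            one_div_mul_cancel hq0.ne', ENNReal.rpow_one,
            ENNReal.ofReal_rpow_of_pos (div_pos (Real.rpow_pos_of_pos hr0 _) (by linarith)),
            show ((1/p') * q : ℝ) = q - 1 by rw [← hpq.div_conj_eq_sub_one]; ring,
            Real.div_rpow (Real.rpow_nonneg hr0.le _) (by linarith),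
            ← Real.rpow_mul hr0.le,
            show ((1-a) * (q-1) : ℝ) = -(3/2) by
              rw [show (1-a : ℝ) = -(a-1) by ring, ha1]; field_simp,
            div_eq_mul_inv, ← Real.rpow_neg (by linarith : (0:ℝ) ≤ a - 1),
            show (-(q-1) : ℝ) = 1 - q by ring]
          rw [ENNReal.ofReal_mul (Real.rpow_nonneg hr0.le _)]
          have hcomb : ENNReal.ofReal (r ^ (-(3/2) : ℝ)) * ENNReal.ofReal r
              = ENNReal.ofReal (r ^ (-(1/2) : ℝ)) := by
            nth_rewrite 2 [← Real.rpow_one r]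
            rw [← ENNReal.ofReal_mul (Real.rpow_nonneg hr0.le _), ← Real.rpow_add hr0,
              show (-(3/2) + 1 : ℝ) = -(1/2) by norm_num]
          calc (∫⁻ t in Ioi r, fq t) *
                (ENNReal.ofReal (r ^ (-(3/2) : ℝ)) * ENNReal.ofReal ((a-1) ^ (1-q : ℝ)))
                * ENNReal.ofReal r
              = ENNReal.ofReal ((a-1) ^ (1-q : ℝ)) *
                  ((ENNReal.ofReal (r ^ (-(3/2) : ℝ)) * ENNReal.ofReal r)
                    * ∫⁻ t in Ioi r, fq t) := by ring
            _ = ENNReal.ofReal C₁ *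
                  (ENNReal.ofReal (r ^ (-(1/2) : ℝ)) * ∫⁻ t in Ioi r, fq t) := by
                rw [hcomb, hC₁]
  set W : ℝ → ℝ≥0∞ := fun r => ENNReal.ofReal (r ^ (-(1/2) : ℝ)) with hW
  have hWm : Measurable W := (measurable_id'.pow_const _).ennreal_ofReal
  calc ∫⁻ r in Ioi (0:ℝ), (∫⁻ t in Ioi r, h t * ENNReal.ofReal t⁻¹) ^ q * ENNReal.ofReal r
      ≤ ∫⁻ r in Ioi (0:ℝ), ENNReal.ofReal C₁ * (W r * ∫⁻ t in Ioi r, fq t) := by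
        refine lintegral_mono_ae ?_
        filter_upwards [ae_restrict_mem measurableSet_Ioi] with r hr using key r hr
    _ = ENNReal.ofReal C₁ * ∫⁻ r in Ioi (0:ℝ), W r * ∫⁻ t in Ioi r, fq t :=
        lintegral_const_mul' _ _ ENNReal.ofReal_ne_top
    _ = ENNReal.ofReal C₁ * ∫⁻ t in Ioi (0:ℝ), fq t * ∫⁻ r in Ioo (0:ℝ) t, W r := by
        rw [← lintegral_tri_swap fq W hfqm hWm]
    _ = ENNReal.ofReal C₁ * ∫⁻ t in Ioi (0:ℝ), ENNReal.ofReal 2 * (h t ^ q * ENNReal.ofReal t) := by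
        congr 1
        refine setLIntegral_congr_fun measurableSet_Ioi ?_
        intro t ht
        have ht0 : (0:ℝ) < t := ht
        rw [hW]
        simp only []
        rw [lintegral_Ioo_rpow_half ht0, hfq]
        simp only []
        rw [ENNReal.mul_rpow_of_nonneg _ _ hq0.le,
          ENNReal.ofReal_rpow_of_pos (Real.rpow_pos_of_pos ht0 _), ← Real.rpow_mul ht0.le,
          show (β * q : ℝ) = 1/2 by rw [hβ]; field_simp; try ring_nf,
          ENNReal.ofReal_mul (by norm_num : (0:ℝ) ≤ 2)]
        have : ENNReal.ofReal (t ^ ((1:ℝ)/2)) * ENNReal.ofReal (t ^ ((1:ℝ)/2))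
            = ENNReal.ofReal t := by
          rw [← ENNReal.ofReal_mul (Real.rpow_nonneg ht0.le _), ← Real.rpow_add ht0]
          norm_num
        calc h t ^ q * ENNReal.ofReal (t ^ ((1:ℝ)/2)) *
              (ENNReal.ofReal 2 * ENNReal.ofReal (t ^ ((1:ℝ)/2)))
            = ENNReal.ofReal 2 * (h t ^ q *
                (ENNReal.ofReal (t ^ ((1:ℝ)/2)) * ENNReal.ofReal (t ^ ((1:ℝ)/2)))) := by ring
          _ = ENNReal.ofReal 2 * (h t ^ q * ENNReal.ofReal t) := by rw [this]
    _ = ENNReal.ofReal (2 * (3 / (2*(q-1))) ^ (1-q : ℝ))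
          * ∫⁻ t in Ioi (0:ℝ), h t ^ q * ENNReal.ofReal t := by
        rw [lintegral_const_mul' _ _ ENNReal.ofReal_ne_top, ← mul_assoc,
          ← ENNReal.ofReal_mul (by rw [hC₁]; exact Real.rpow_nonneg (by linarith) _),
          show (C₁ * 2 : ℝ) = 2 * (3 / (2*(q-1))) ^ (1-q : ℝ) by
            rw [hC₁, ha1]; ring]



lemma lintegral_rmeas (g : ℝ → ℝ≥0∞) :
    ∫⁻ r, g r ∂rmeas = ∫⁻ r in Ioi (0:ℝ), ENNReal.ofReal (2 * Real.pi * r) * g r := by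
  rw [rmeas, lintegral_withDensity_eq_lintegral_mul_non_measurable₀ _
    (f := fun r => ENNReal.ofReal (2 * Real.pi * r))
    ((measurable_const.mul measurable_id').ennreal_ofReal.aemeasurable)
    (Filter.Eventually.of_forall fun x => ENNReal.ofReal_lt_top) g]
  rfl

lemma rmeas_ae {P : ℝ → Prop} (hP : ∀ r ∈ Ioi (0:ℝ), P r) : ∀ᵐ r ∂rmeas, P r := by
  refine Filter.Eventually.filter_mono
    ((withDensity_absolutelyContinuous _ _).ae_le) ?_
  filter_upwards [ae_restrict_mem measurableSet_Ioi] with r hr using hP r hr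

lemma glue {q C : ℝ} (hq : 1 < q) {φ : ℝ → ℝ} {T h : ℝ → ℝ≥0∞}
    (hT : ∀ r ∈ Ioi (0:ℝ), (‖φ r‖₊ : ℝ≥0∞) ≤ T r)
    (hhardy : ∫⁻ r in Ioi (0:ℝ), T r ^ q * ENNReal.ofReal r
      ≤ ENNReal.ofReal C * ∫⁻ t in Ioi (0:ℝ), h t ^ q * ENNReal.ofReal t) :
    ∫⁻ r, (‖φ r‖₊ : ℝ≥0∞) ^ q ∂rmeas ≤ ENNReal.ofReal C * ∫⁻ t, h t ^ q ∂rmeas := by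
  have hq0 : (0:ℝ) < q := lt_trans one_pos hq
  have h2pi : (0:ℝ) ≤ 2 * Real.pi := by positivity
  rw [lintegral_rmeas, lintegral_rmeas]
  calc ∫⁻ r in Ioi (0:ℝ), ENNReal.ofReal (2 * Real.pi * r) * (‖φ r‖₊ : ℝ≥0∞) ^ q
      ≤ ∫⁻ r in Ioi (0:ℝ), ENNReal.ofReal (2 * Real.pi) * (T r ^ q * ENNReal.ofReal r) := by
        refine lintegral_mono_ae ?_
        filter_upwards [ae_restrict_mem measurableSet_Ioi] with r hr
        rw [ENNReal.ofReal_mul h2pi]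
        calc ENNReal.ofReal (2 * Real.pi) * ENNReal.ofReal r * (‖φ r‖₊ : ℝ≥0∞) ^ q
            = ENNReal.ofReal (2 * Real.pi) * ((‖φ r‖₊ : ℝ≥0∞) ^ q * ENNReal.ofReal r) := by
              ring
          _ ≤ ENNReal.ofReal (2 * Real.pi) * (T r ^ q * ENNReal.ofReal r) := by
              gcongr
              exact hT r hr
    _ = ENNReal.ofReal (2 * Real.pi) * ∫⁻ r in Ioi (0:ℝ), T r ^ q * ENNReal.ofReal r :=
        lintegral_const_mul' _ _ ENNReal.ofReal_ne_top
    _ ≤ ENNReal.ofReal (2 * Real.pi) *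
          (ENNReal.ofReal C * ∫⁻ t in Ioi (0:ℝ), h t ^ q * ENNReal.ofReal t) := by
        gcongr
    _ = ENNReal.ofReal C * ∫⁻ t in Ioi (0:ℝ), ENNReal.ofReal (2 * Real.pi * t) * h t ^ q := by
        rw [show ENNReal.ofReal (2 * Real.pi) *
              (ENNReal.ofReal C * ∫⁻ t in Ioi (0:ℝ), h t ^ q * ENNReal.ofReal t)
            = ENNReal.ofReal C * (ENNReal.ofReal (2 * Real.pi) *
              ∫⁻ t in Ioi (0:ℝ), h t ^ q * ENNReal.ofReal t) by ring,
          ← lintegral_const_mul' _ _ ENNReal.ofReal_ne_top]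
        congr 1
        refine lintegral_congr fun t => ?_
        rw [ENNReal.ofReal_mul h2pi]
        ring

lemma glue2 {q C : ℝ} (hq : 1 < q) (hC : 0 < C) {φ : ℝ → ℝ} (ψ₁ ψ₂ : ℝ → ℂ) {T : ℝ → ℝ≥0∞}
    {q' : ℝ≥0∞} (hq'0 : q' ≠ 0) (hq't : q' ≠ ∞) (hq'r : q'.toReal = q)
    (hT : ∀ r ∈ Ioi (0:ℝ), (‖φ r‖₊ : ℝ≥0∞) ≤ T r)
    (hhardy : ∫⁻ r in Ioi (0:ℝ), T r ^ q * ENNReal.ofReal r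
      ≤ ENNReal.ofReal C *
          ∫⁻ t in Ioi (0:ℝ), ((‖ψ₁ t‖₊ : ℝ≥0∞) * (‖ψ₂ t‖₊ : ℝ≥0∞)) ^ q * ENNReal.ofReal t) :
    eLpNorm φ q' rmeas
      ≤ ENNReal.ofReal (C ^ (1/q)) * eLpNorm (fun r => ψ₁ r * ψ₂ r) q' rmeas := by
  have hq0 : (0:ℝ) < q := lt_trans one_pos hq
  have hglue := glue hq (h := fun t => (‖ψ₁ t‖₊ : ℝ≥0∞) * (‖ψ₂ t‖₊ : ℝ≥0∞)) hT hhardy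
  rw [eLpNorm_eq_lintegral_rpow_enorm_toReal hq'0 hq't, eLpNorm_eq_lintegral_rpow_enorm_toReal hq'0 hq't,
    hq'r]
  have hmul : ∀ t : ℝ, ((‖ψ₁ t * ψ₂ t‖₊ : ℝ≥0∞)) = (‖ψ₁ t‖₊ : ℝ≥0∞) * (‖ψ₂ t‖₊ : ℝ≥0∞) := by
    intro t; rw [nnnorm_mul]; push_cast; ring
  calc (∫⁻ r, (‖φ r‖₊ : ℝ≥0∞) ^ q ∂rmeas) ^ (1/q)
      ≤ (ENNReal.ofReal C *
          ∫⁻ t, ((‖ψ₁ t‖₊ : ℝ≥0∞) * (‖ψ₂ t‖₊ : ℝ≥0∞)) ^ q ∂rmeas) ^ (1/q) :=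
        ENNReal.rpow_le_rpow hglue (by positivity)
    _ = ENNReal.ofReal (C ^ (1/q)) *
          (∫⁻ t, (‖ψ₁ t * ψ₂ t‖₊ : ℝ≥0∞) ^ q ∂rmeas) ^ (1/q) := by
        rw [ENNReal.mul_rpow_of_nonneg _ _ (by positivity : (0:ℝ) ≤ 1/q),
          ENNReal.ofReal_rpow_of_pos hC]
        congr 2
        exact lintegral_congr fun t => by rw [hmul t]

section N3bounds

variable {ψ₁ ψ₂ : ℝ → ℂ}

lemma Re2_measurable (h1 : Measurable ψ₁) (h2 : Measurable ψ₂) :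
    Measurable (Re2 ψ₁ ψ₂) := by
  apply Complex.measurable_re.comp
  exact ((continuous_star.measurable.comp h1).mul h2)

lemma Re2_bound (r : ℝ) :
    (‖Re2 ψ₁ ψ₂ r‖₊ : ℝ≥0∞) ≤ (‖ψ₁ r‖₊ : ℝ≥0∞) * ‖ψ₂ r‖₊ := by
  simp only [← enorm_eq_nnnorm]
  rw [Real.enorm_eq_ofReal_abs, ← ofReal_norm_eq_enorm, ← ofReal_norm_eq_enorm,
    ← ENNReal.ofReal_mul (norm_nonneg _)]
  apply ENNReal.ofReal_le_ofReal
  calc |Re2 ψ₁ ψ₂ r| ≤ ‖(starRingEnd ℂ) (ψ₁ r) * ψ₂ r‖ := Complex.abs_re_le_norm _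
    _ = ‖ψ₁ r‖ * ‖ψ₂ r‖ := by
        rw [norm_mul, Complex.norm_conj]

lemma ennnorm_coe_pos {t : ℝ} (ht : 0 < t) : (‖t‖₊ : ℝ≥0∞) = ENNReal.ofReal t := by
  rw [← enorm_eq_nnnorm, Real.enorm_eq_ofReal_abs, abs_of_pos ht]

/-- pointwise bound for the `k = 1` nonlinearity. -/
lemma hT1 {r : ℝ} (hr : r ∈ Ioi (0:ℝ)) :
    (‖2 / r^2 * Atheta2 ψ₁ ψ₂ r‖₊ : ℝ≥0∞)
      ≤ ENNReal.ofReal (r ^ (-2 : ℝ)) *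
          ∫⁻ t in Ioo (0:ℝ) r, ((‖ψ₁ t‖₊ : ℝ≥0∞) * ‖ψ₂ t‖₊) * ENNReal.ofReal t := by
  have hr0 : (0:ℝ) < r := hr
  have h2 : r ^ (-2:ℝ) = (r^2)⁻¹ := by
    rw [show (-2:ℝ) = -((2:ℕ):ℝ) by norm_num, Real.rpow_neg hr0.le, Real.rpow_natCast]
  have habs : |2 / r^2 * Atheta2 ψ₁ ψ₂ r|
      = r ^ (-2:ℝ) * |∫ t in (0:ℝ)..r, Re2 ψ₁ ψ₂ t * t| := by
    rw [Atheta2, abs_mul, abs_mul, h2]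
    rw [abs_of_pos (by positivity : (0:ℝ) < 2 / r^2),
      show |(-(1/2):ℝ)| = (1/2:ℝ) by norm_num]
    ring
  rw [← enorm_eq_nnnorm, Real.enorm_eq_ofReal_abs, habs,
    ENNReal.ofReal_mul (Real.rpow_nonneg hr0.le _)]
  gcongr
  rw [intervalIntegral.integral_of_le hr0.le]
  calc ENNReal.ofReal |∫ t in Ioc (0:ℝ) r, Re2 ψ₁ ψ₂ t * t|
      = (‖∫ t in Ioc (0:ℝ) r, Re2 ψ₁ ψ₂ t * t‖₊ : ℝ≥0∞) :=
        (Real.enorm_eq_ofReal_abs _).symm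
    _ ≤ ∫⁻ t in Ioc (0:ℝ) r, (‖Re2 ψ₁ ψ₂ t * t‖₊ : ℝ≥0∞) :=
        enorm_integral_le_lintegral_enorm _
    _ = ∫⁻ t in Ioo (0:ℝ) r, (‖Re2 ψ₁ ψ₂ t * t‖₊ : ℝ≥0∞) :=
        (setLIntegral_congr Ioo_ae_eq_Ioc).symm
    _ ≤ ∫⁻ t in Ioo (0:ℝ) r, ((‖ψ₁ t‖₊ : ℝ≥0∞) * ‖ψ₂ t‖₊) * ENNReal.ofReal t := by
        refine lintegral_mono_ae ?_
        filter_upwards [ae_restrict_mem measurableSet_Ioo] with t ht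
        rw [nnnorm_mul, ENNReal.coe_mul, ennnorm_coe_pos ht.1]
        exact mul_le_mul' (Re2_bound t) le_rfl

/-- pointwise bound for the `k = 2` nonlinearity. -/
lemma hT2 {r : ℝ} (hr : r ∈ Ioi (0:ℝ)) :
    (‖∫ t in Ioi r, Re2 ψ₁ ψ₂ t / t‖₊ : ℝ≥0∞)
      ≤ ∫⁻ t in Ioi r, ((‖ψ₁ t‖₊ : ℝ≥0∞) * ‖ψ₂ t‖₊) * ENNReal.ofReal t⁻¹ := by
  have hr0 : (0:ℝ) < r := hr
  calc (‖∫ t in Ioi r, Re2 ψ₁ ψ₂ t / t‖₊ : ℝ≥0∞)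
      ≤ ∫⁻ t in Ioi r, (‖Re2 ψ₁ ψ₂ t / t‖₊ : ℝ≥0∞) :=
        enorm_integral_le_lintegral_enorm _
    _ ≤ ∫⁻ t in Ioi r, ((‖ψ₁ t‖₊ : ℝ≥0∞) * ‖ψ₂ t‖₊) * ENNReal.ofReal t⁻¹ := by
        refine lintegral_mono_ae ?_
        filter_upwards [ae_restrict_mem measurableSet_Ioi] with t ht
        have ht0 : (0:ℝ) < t := lt_trans hr0 ht
        rw [div_eq_mul_inv, nnnorm_mul, ENNReal.coe_mul, ennnorm_coe_pos (inv_pos.2 ht0)]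
        exact mul_le_mul' (Re2_bound t) le_rfl

end N3bounds

/-- The main gluing step. -/
lemma final_aux {p₁ p₂ p₃ p₄' q' : ℝ≥0∞} {qr Ck : ℝ} (hqr : 1 < qr) (hCk : 0 < Ck)
    (hq'0 : q' ≠ 0) (hq't : q' ≠ ∞) (hq'r : q'.toReal = qr)
    (hpqr1 : 1/p₄' = 1/q' + 1/p₃) (hpqr2 : 1/q' = 1/p₁ + 1/p₂)
    {ψ₁ ψ₂ ψ₃ : ℝ → ℂ} (h1 : Measurable ψ₁) (h2 : Measurable ψ₂) (h3 : Measurable ψ₃)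
    {N : ℝ → ℂ} {φ' : ℝ → ℝ} (hφ'm : Measurable φ')
    (hae : N =ᵐ[rmeas] fun r => (φ' r : ℂ) * ψ₃ r)
    {T : ℝ → ℝ≥0∞}
    (hT : ∀ r ∈ Ioi (0:ℝ), (‖φ' r‖₊ : ℝ≥0∞) ≤ T r)
    (hhardy : ∫⁻ r in Ioi (0:ℝ), T r ^ qr * ENNReal.ofReal r
      ≤ ENNReal.ofReal Ck *
          ∫⁻ t in Ioi (0:ℝ), ((‖ψ₁ t‖₊ : ℝ≥0∞) * ‖ψ₂ t‖₊) ^ qr * ENNReal.ofReal t) :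
    eLpNorm N p₄' rmeas ≤ ENNReal.ofReal (Ck ^ (1/qr)) * eLpNorm ψ₁ p₁ rmeas *
      eLpNorm ψ₂ p₂ rmeas * eLpNorm ψ₃ p₃ rmeas := by
  have hsmul : (fun r => (φ' r : ℂ) * ψ₃ r) = φ' • ψ₃ := by
    funext r
    simp [Pi.smul_apply', Complex.real_smul]
  calc eLpNorm N p₄' rmeas = eLpNorm (φ' • ψ₃) p₄' rmeas := by
        rw [eLpNorm_congr_ae hae, hsmul]
    _ ≤ eLpNorm φ' q' rmeas * eLpNorm ψ₃ p₃ rmeas :=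
        eLpNorm_smul_le_mul_eLpNorm h3.aestronglyMeasurable hφ'm.aestronglyMeasurable
            (hpqr := ⟨by simpa only [one_div] using hpqr1.symm⟩)
    _ ≤ (ENNReal.ofReal (Ck ^ (1/qr)) * eLpNorm (fun r => ψ₁ r * ψ₂ r) q' rmeas)
          * eLpNorm ψ₃ p₃ rmeas := by
        gcongr
        exact glue2 hqr hCk ψ₁ ψ₂ hq'0 hq't hq'r hT hhardy
    _ ≤ (ENNReal.ofReal (Ck ^ (1/qr)) * (eLpNorm ψ₁ p₁ rmeas * eLpNorm ψ₂ p₂ rmeas))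
          * eLpNorm ψ₃ p₃ rmeas := by
        gcongr
        have hsmul2 : (fun r => ψ₁ r * ψ₂ r) = ψ₁ • ψ₂ := by
          funext r; simp [Pi.smul_apply', smul_eq_mul]
        rw [hsmul2]
        exact eLpNorm_smul_le_mul_eLpNorm h2.aestronglyMeasurable h1.aestronglyMeasurable
            (hpqr := ⟨by simpa only [one_div] using hpqr2.symm⟩)
    _ = ENNReal.ofReal (Ck ^ (1/qr)) * eLpNorm ψ₁ p₁ rmeas * eLpNorm ψ₂ p₂ rmeas
          * eLpNorm ψ₃ p₃ rmeas := by ring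

/-- Nonlinear estimates (Hölder-type) for the cubic nonlinearities `N_{3,k}`, `k ∈ {0,1,2}`. -/
theorem nonlinear_estimates_holder_cubic (k : ℕ) (hk : k ≤ 2)
    (p₁ p₂ p₃ p₄ p₄' : ℝ≥0∞)
    (hp₁ : 1 ≤ p₁) (hp₂ : 1 ≤ p₂) (hp₃ : 1 ≤ p₃) (hp₄ : 1 ≤ p₄)
    (hsum : 1 / p₁ + 1 / p₂ + 1 / p₃ + 1 / p₄ = 1)
    (hinf₁ : p₁ = ∞ → p₂ ≠ ∞ ∧ p₃ ≠ ∞ ∧ p₄ ≠ ∞)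
    (hinf₂ : p₂ = ∞ → p₃ ≠ ∞ ∧ p₄ ≠ ∞)
    (hinf₃ : p₃ = ∞ → p₄ ≠ ∞)
    (hconj : 1 / p₄ + 1 / p₄' = 1) :
    ∃ C : ℝ, 0 < C ∧ ∀ ψ₁ ψ₂ ψ₃ : ℝ → ℂ,
      Measurable ψ₁ → Measurable ψ₂ → Measurable ψ₃ →
      eLpNorm (N3 k ψ₁ ψ₂ ψ₃) p₄' rmeas ≤
        ENNReal.ofReal C * eLpNorm ψ₁ p₁ rmeas * eLpNorm ψ₂ p₂ rmeas *
          eLpNorm ψ₃ p₃ rmeas := by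
  -- exponent bookkeeping
  set S : ℝ≥0∞ := 1/p₁ + 1/p₂ with hS
  have hsum' : S + (1/p₃ + 1/p₄) = 1 := by rw [← add_assoc]; exact hsum
  have hSfin : S ≠ ∞ := by
    intro hcon
    rw [hcon, top_add] at hsum'
    exact (ENNReal.top_ne_one) hsum'
  have h34 : 1/p₃ + 1/p₄ ≠ 0 := by
    intro hcon
    rw [add_eq_zero] at hcon
    simp only [one_div, ENNReal.inv_eq_zero] at hcon
    exact hinf₃ hcon.1 hcon.2
  have hSlt : S < 1 := by
    calc S < S + (1/p₃ + 1/p₄) := ENNReal.lt_add_right hSfin h34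
      _ = 1 := hsum'
  have hS0 : S ≠ 0 := by
    intro hcon
    rw [hS, add_eq_zero] at hcon
    simp only [one_div, ENNReal.inv_eq_zero] at hcon
    exact (hinf₁ hcon.1).1 hcon.2
  set q' : ℝ≥0∞ := S⁻¹ with hq'
  have hq'0 : q' ≠ 0 := ENNReal.inv_ne_zero.2 hSfin
  have hq't : q' ≠ ∞ := ENNReal.inv_ne_top.2 hS0
  set qr : ℝ := q'.toReal with hqrdef
  have hqr : 1 < qr := by
    rw [hqrdef, hq', ENNReal.toReal_inv]
    have hlt1 : S.toReal < 1 := by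
      have := (ENNReal.toReal_lt_toReal hSfin ENNReal.one_ne_top).2 hSlt
      simpa using this
    have hpos : 0 < S.toReal := ENNReal.toReal_pos hS0 hSfin
    exact (one_lt_inv₀ hpos).2 hlt1
  have hq'r : q'.toReal = qr := rfl
  have hq'S : 1/q' = S := by rw [one_div, hq', inv_inv]
  have hpqr2 : 1/q' = 1/p₁ + 1/p₂ := by rw [hq'S, hS]
  have hpqr1 : 1/p₄' = 1/q' + 1/p₃ := by
    have h4fin : 1/p₄ ≠ ∞ := by
      rw [one_div]
      exact ENNReal.inv_ne_top.2 (fun hcon => by simp [hcon] at hp₄)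
    have e1 : 1/p₄ + 1/p₄' = 1/p₄ + (1/q' + 1/p₃) := by
      calc 1/p₄ + 1/p₄' = 1 := hconj
        _ = S + 1/p₃ + 1/p₄ := hsum.symm
        _ = 1/p₄ + (1/q' + 1/p₃) := by rw [hq'S]; ring
    exact (ENNReal.add_right_inj h4fin).1 e1
  have hqr0 : (0:ℝ) < qr := lt_trans one_pos hqr
  -- case analysis on k
  interval_cases k
  · -- k = 0
    refine ⟨(1:ℝ) ^ (1/qr), by positivity, ?_⟩
    intro ψ₁ ψ₂ ψ₃ h1 h2 h3
    set φ' : ℝ → ℝ := fun r => -(Re2 ψ₁ ψ₂ r) with hφ'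
    have hφ'm : Measurable φ' := (Re2_measurable h1 h2).neg
    have hae : N3 0 ψ₁ ψ₂ ψ₃ =ᵐ[rmeas] fun r => ((φ' r : ℝ) : ℂ) * ψ₃ r := by
      refine Filter.Eventually.of_forall fun r => ?_
      show -((Re2 ψ₁ ψ₂ r : ℝ) : ℂ) * ψ₃ r = ((-(Re2 ψ₁ ψ₂ r) : ℝ) : ℂ) * ψ₃ r
      push_cast
      ring
    refine final_aux hqr one_pos hq'0 hq't hq'r hpqr1 hpqr2 h1 h2 h3
      hφ'm hae
      (T := fun t => (‖ψ₁ t‖₊ : ℝ≥0∞) * ‖ψ₂ t‖₊)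
      (fun r _ => by
        show (‖-(Re2 ψ₁ ψ₂ r)‖₊ : ℝ≥0∞) ≤ _
        rw [nnnorm_neg]
        exact Re2_bound r) ?_
    rw [ENNReal.ofReal_one, one_mul]
  · -- k = 1
    have hck1 : (0:ℝ) < 1/(qr-1) := div_pos one_pos (by linarith)
    refine ⟨(1/(qr-1)) ^ (1/qr), Real.rpow_pos_of_pos hck1 _, ?_⟩
    intro ψ₁ ψ₂ ψ₃ h1 h2 h3
    set F₁ : ℝ × ℝ → ℝ := fun p =>
      if 0 < p.2 ∧ p.2 ≤ p.1 then Re2 ψ₁ ψ₂ p.2 * p.2 else 0 with hF₁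
    have hF₁m : StronglyMeasurable F₁ := by
      apply Measurable.stronglyMeasurable
      refine Measurable.ite ?_ (((Re2_measurable h1 h2).comp measurable_snd).mul
        measurable_snd) measurable_const
      exact (measurableSet_lt measurable_const measurable_snd).inter
        (measurableSet_le measurable_snd measurable_fst)
    set G₁ : ℝ → ℝ := fun r => ∫ t, F₁ (r, t) with hG₁
    have hG₁m : Measurable G₁ := hF₁m.integral_prod_right'.measurable
    set φ' : ℝ → ℝ := fun r => 2 / r^2 * (-(1/2) * G₁ r) with hφ'
    have hφ'm : Measurable φ' :=
      (measurable_const.div (measurable_id.pow_const 2)).mul (measurable_const.mul hG₁m)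
    have hkey : ∀ r ∈ Ioi (0:ℝ), φ' r = 2 / r^2 * Atheta2 ψ₁ ψ₂ r := by
      intro r hr
      have hr0 : (0:ℝ) < r := hr
      rw [hφ']
      simp only []
      congr 1
      rw [Atheta2]
      congr 1
      rw [intervalIntegral.integral_of_le hr0.le, ← integral_indicator measurableSet_Ioc]
      refine integral_congr_ae (Filter.Eventually.of_forall fun t => ?_)
      rw [hF₁]
      simp only [indicator_apply, mem_Ioc]
    have hae : N3 1 ψ₁ ψ₂ ψ₃ =ᵐ[rmeas] fun r => ((φ' r : ℝ) : ℂ) * ψ₃ r := by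
      refine rmeas_ae fun r hr => ?_
      show ((2 / r ^ 2 * Atheta2 ψ₁ ψ₂ r : ℝ) : ℂ) * ψ₃ r = ((φ' r : ℝ) : ℂ) * ψ₃ r
      rw [hkey r hr]
    refine final_aux hqr hck1 hq'0 hq't hq'r hpqr1 hpqr2
      h1 h2 h3 hφ'm hae
      (T := fun r => ENNReal.ofReal (r ^ (-2 : ℝ)) *
        ∫⁻ t in Ioo (0:ℝ) r, ((‖ψ₁ t‖₊ : ℝ≥0∞) * ‖ψ₂ t‖₊) * ENNReal.ofReal t)
      (fun r hr => by
        show (‖φ' r‖₊ : ℝ≥0∞) ≤ _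
        rw [hkey r hr]
        exact hT1 hr) ?_
    exact hardy1 hqr (h1.enorm.mul h2.enorm)
  · -- k = 2
    have hck2 : (0:ℝ) < 2 * (3 / (2*(qr-1))) ^ (1-qr : ℝ) :=
      mul_pos two_pos (Real.rpow_pos_of_pos (div_pos (by norm_num) (by linarith)) _)
    refine ⟨(2 * (3 / (2*(qr-1))) ^ (1-qr : ℝ)) ^ (1/qr), Real.rpow_pos_of_pos hck2 _, ?_⟩
    intro ψ₁ ψ₂ ψ₃ h1 h2 h3
    set F₂ : ℝ × ℝ → ℝ := fun p =>
      if p.1 < p.2 then Re2 ψ₁ ψ₂ p.2 / p.2 else 0 with hF₂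
    have hF₂m : StronglyMeasurable F₂ := by
      apply Measurable.stronglyMeasurable
      refine Measurable.ite ?_ (((Re2_measurable h1 h2).comp measurable_snd).div
        measurable_snd) measurable_const
      exact measurableSet_lt measurable_fst measurable_snd
    set G₂ : ℝ → ℝ := fun r => ∫ t, F₂ (r, t) with hG₂
    have hG₂m : Measurable G₂ := hF₂m.integral_prod_right'.measurable
    set φ' : ℝ → ℝ := fun r => -(G₂ r) with hφ'
    have hφ'm : Measurable φ' := hG₂m.neg
    have hkey : ∀ r : ℝ, G₂ r = ∫ t in Ioi r, Re2 ψ₁ ψ₂ t / t := by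
      intro r
      rw [hG₂]
      simp only []
      rw [← integral_indicator measurableSet_Ioi]
      refine integral_congr_ae (Filter.Eventually.of_forall fun t => ?_)
      rw [hF₂]
      simp only [indicator_apply, mem_Ioi]
    have hae : N3 2 ψ₁ ψ₂ ψ₃ =ᵐ[rmeas] fun r => ((φ' r : ℝ) : ℂ) * ψ₃ r := by
      refine Filter.Eventually.of_forall fun r => ?_
      show -(((∫ t in Ioi r, Re2 ψ₁ ψ₂ t / t : ℝ)) : ℂ) * ψ₃ r = ((-(G₂ r) : ℝ) : ℂ) * ψ₃ r
      rw [hkey r]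
      push_cast
      ring
    refine final_aux hqr hck2 hq'0 hq't hq'r hpqr1 hpqr2
      h1 h2 h3 hφ'm hae
      (T := fun r => ∫⁻ t in Ioi r, ((‖ψ₁ t‖₊ : ℝ≥0∞) * ‖ψ₂ t‖₊) * ENNReal.ofReal t⁻¹)
      (fun r hr => by
        show (‖-(G₂ r)‖₊ : ℝ≥0∞) ≤ _
        rw [nnnorm_neg, hkey r]
        exact hT2 hr) ?_
    exact hardy2 hqr (h1.enorm.mul h2.enorm)
end
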